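/- arXiv:1303.4133 — 8 statements merged into one kernel-verified Lean document; each statement's English description precedes it below -/
import Mathlib

section
/- Let (N, M) be a factorizable pair of triangulated subcategories of a triangulated category T, and let Q : T → T/(N ∩ M) be the Verdier quotient functor by the triangulated subcategory N ∩ M. Then for any objects x in N and y in M, every morphism Q(x) → Q(y) in T/(N ∩ M) is the zero morphism. -/
open CategoryTheory CategoryTheory.Limits CategoryTheory.Pretriangulated

universe w v u v₂ u₂ v₃ u₃ v₄ u₄ v₅ u₅ v₆ u₆

structure IsTriangulatedSub {C : Type u} [Category.{v} C] [HasZeroObject C] [HasShift C ℤ]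
    [Preadditive C] [∀ n : ℤ, (shiftFunctor C n).Additive] [Pretriangulated C]
    (P : C → Prop) : Prop where
  iso_closed : ∀ ⦃x y : C⦄, (x ≅ y) → P x → P y
  zero : ∀ x : C, IsZero x → P x
  shift : ∀ (x : C) (n : ℤ), P x → P (x⟦n⟧)
  two_of_three₁₂ : ∀ T ∈ distTriang C, P T.obj₁ → P T.obj₂ → P T.obj₃
  two_of_three₂₃ : ∀ T ∈ distTriang C, P T.obj₂ → P T.obj₃ → P T.obj₁
  two_of_three₁₃ : ∀ T ∈ distTriang C, P T.obj₁ → P T.obj₃ → P T.obj₂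

def IsSummandClosed {C : Type u} [Category.{v} C] [Preadditive C]
    [HasBinaryBiproducts C] (P : C → Prop) : Prop :=
  ∀ x y : C, P (x ⊞ y) → P x ∧ P y

def coneIn {C : Type u} [Category.{v} C] [HasZeroObject C] [HasShift C ℤ]
    [Preadditive C] [∀ n : ℤ, (shiftFunctor C n).Additive] [Pretriangulated C]
    (P : C → Prop) : MorphismProperty C :=
  fun X Y f => ∃ (Z : C) (g : Y ⟶ Z) (h : Z ⟶ X⟦(1 : ℤ)⟧),
    (Triangle.mk f g h ∈ distTriang C) ∧ P Z


/-- The ordered pair of subcategories `(P, P')` is *factorizable* if every morphism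
from an object of `P` to an object of `P'` factors through an object of `P ∩ P'`. -/
def Factorizable {C : Type u} [Category.{v} C] (P P' : C → Prop) : Prop :=
  ∀ (x y : C) (f : x ⟶ y), P x → P' y →
    ∃ (z : C) (a : x ⟶ z) (b : z ⟶ y), (P z ∧ P' z) ∧ a ≫ b = f

open ZeroObject

/-- If `(N, M)` is a factorizable pair of triangulated subcategories
of a triangulated category `C` and `Q : C ⥤ D` is the Verdier quotient of `C` by the
triangulated subcategory `N ∩ M`, then every morphism `Q(x) ⟶ Q(y)` with `x` in `N`
and `y` in `M` is zero. -/
theorem quotient_of_factorizable_pair_hom_zero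
    {C : Type u} [Category.{v} C] [HasZeroObject C] [HasShift C ℤ] [Preadditive C]
    [∀ n : ℤ, (shiftFunctor C n).Additive] [Pretriangulated C] [IsTriangulated C]
    {D : Type u₂} [Category.{v₂} D] [HasZeroObject D] [HasShift D ℤ] [Preadditive D]
    [∀ n : ℤ, (shiftFunctor D n).Additive] [Pretriangulated D] [IsTriangulated D]
    (N M : C → Prop) (hN : IsTriangulatedSub N) (hM : IsTriangulatedSub M)
    (hfac : Factorizable N M)
    (Q : C ⥤ D) [Q.CommShift ℤ] [Q.IsTriangulated]
    [Q.IsLocalization (coneIn (fun z => N z ∧ M z))] :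
    ∀ (x y : C), N x → M y → ∀ f : Q.obj x ⟶ Q.obj y, f = 0 := by
  intro x y hx hy f
  set P : C → Prop := fun z => N z ∧ M z with hP
  -- the triangulated subcategory N ∩ M
  let S : ObjectProperty C := P
  haveI : S.IsTriangulated :=
    { exists_zero := ⟨0, isZero_zero C, hN.zero 0 (isZero_zero C), hM.zero 0 (isZero_zero C)⟩
      isStableUnderShiftBy := fun n => ⟨fun X hX => ⟨hN.shift X n hX.1, hM.shift X n hX.2⟩⟩
      ext₂' := fun T hT h₁ h₃ => ObjectProperty.le_isoClosure _ _
        ⟨hN.two_of_three₁₃ T hT h₁.1 h₃.1, hM.two_of_three₁₃ T hT h₁.2 h₃.2⟩ }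
  have hW : coneIn P = S.trW := by
    ext X Y g
    constructor
    · rintro ⟨Z, a, b, hT, hZ⟩
      exact ⟨Z, a, b, hT, hZ⟩
    · rintro ⟨Z, a, b, hT, hZ⟩
      exact ⟨Z, a, b, hT, hZ⟩
  haveI : Q.IsLocalization S.trW := hW ▸ inferInstance
  -- represent f as a left fraction
  obtain ⟨φ, hφ⟩ := Localization.exists_leftFraction Q S.trW f
  rw [hφ, MorphismProperty.LeftFraction.map_eq]
  -- the target of the fraction lies in M
  obtain ⟨Z, a, b, hT, hZ⟩ := φ.hs
  have hzM : M φ.Y' := hM.two_of_three₁₃ _ hT hy hZ.2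
  -- factor φ.f through an object of N ∩ M
  obtain ⟨w, u, v, ⟨hwN, hwM⟩, huv⟩ := hfac x φ.Y' φ.f hx hzM
  -- Q.obj w is a zero object
  have hw0 : S.trW (0 : w ⟶ 0) :=
    ObjectProperty.trW.mk' S (contractible_distinguished w) ⟨hwN, hwM⟩
  haveI := Localization.inverts Q S.trW _ hw0
  have hQw : IsZero (Q.obj w) :=
    IsZero.of_iso (Q.map_isZero (isZero_zero C)) (asIso (Q.map (0 : w ⟶ 0)))
  have hv : Q.map v = 0 := hQw.eq_of_src _ _
  rw [← huv, Q.map_comp, Category.assoc, hv, zero_comp, comp_zero]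
end

section
/- Let M and N be triangulated subcategories of a triangulated category T such that every morphism of T from an object of M to an object of N is the zero morphism. Then the composition of the inclusion M ↪ T with the Verdier quotient functor Q : T → T/N is fully faithful. -/
open CategoryTheory CategoryTheory.Limits CategoryTheory.Pretriangulated

universe w v u v₂ u₂ v₃ u₃ v₄ u₄ v₅ u₅ v₆ u₆

open ZeroObject

/-- Let `M` and `N` be triangulated subcategories of a triangulated
category `C` such that every morphism from an object of `M` to an object of `N` is
zero, and let `Q : C ⥤ D` be the Verdier quotient of `C` by `N`. Then the composition
of the inclusion `M ↪ C` with `Q` is fully faithful, i.e. for all `x`, `y` in `M`,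
the map `(x ⟶ y) → (Q(x) ⟶ Q(y))` is bijective. -/
theorem quotient_restricted_fully_faithful
    {C : Type u} [Category.{v} C] [HasZeroObject C] [HasShift C ℤ] [Preadditive C]
    [∀ n : ℤ, (shiftFunctor C n).Additive] [Pretriangulated C] [IsTriangulated C]
    {D : Type u₂} [Category.{v₂} D] [HasZeroObject D] [HasShift D ℤ] [Preadditive D]
    [∀ n : ℤ, (shiftFunctor D n).Additive] [Pretriangulated D] [IsTriangulated D]
    (M N : C → Prop) (hM : IsTriangulatedSub M) (hN : IsTriangulatedSub N)
    (hzero : ∀ (x y : C) (f : x ⟶ y), M x → N y → f = 0)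
    (Q : C ⥤ D) [Q.CommShift ℤ] [Q.IsTriangulated] [Q.IsLocalization (coneIn N)] :
    ∀ x y : C, M x → M y → Function.Bijective (fun f : x ⟶ y => Q.map f) := by
  intro x y hx hy
  haveI S : ObjectProperty.IsTriangulated (C := C) N :=
    { exists_zero := ⟨0, isZero_zero C, hN.zero 0 (isZero_zero C)⟩
      isStableUnderShiftBy := fun n => ⟨fun X hX => hN.shift X n hX⟩
      ext₂' := fun T hT h₁ h₃ =>
        ObjectProperty.le_isoClosure _ _ (hN.two_of_three₁₃ T hT h₁ h₃) }
  have hW : ObjectProperty.trW (C := C) N = coneIn N := by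
    ext a b f
    constructor
    · rintro ⟨Z, g, h, H, mem⟩; exact ⟨Z, g, h, H, mem⟩
    · rintro ⟨Z, g, h, H, mem⟩; exact ⟨Z, g, h, H, mem⟩
  haveI : (coneIn N).HasLeftCalculusOfFractions := hW ▸ inferInstance
  constructor
  · intro f₁ f₂ hf
    rw [MorphismProperty.map_eq_iff_postcomp Q (coneIn N)] at hf
    obtain ⟨Z, s, ⟨W', g, h, H, mem⟩, fac⟩ := hf
    obtain ⟨q, hq⟩ := Triangle.coyoneda_exact₂ _ (inv_rot_of_distTriang _ H) (f₁ - f₂)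
      (by change (f₁ - f₂) ≫ s = 0; rw [Preadditive.sub_comp, fac, sub_self])
    rw [hzero _ _ q hx (hN.shift _ (-1) mem), zero_comp] at hq
    exact sub_eq_zero.1 hq
  · intro φ
    obtain ⟨ψ, hψ⟩ := Localization.exists_leftFraction Q (coneIn N) φ
    obtain ⟨Z, g, h, H, mem⟩ := ψ.hs
    obtain ⟨a, ha⟩ := Triangle.coyoneda_exact₂ _ H ψ.f (hzero _ _ _ hx mem)
    refine ⟨a, ?_⟩
    have hs : IsIso (Q.map ψ.s) := Localization.inverts Q (coneIn N) ψ.s ψ.hs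
    rw [hψ, ← cancel_mono (Q.map ψ.s),
      MorphismProperty.LeftFraction.map_comp_map_s]
    change Q.map (show x ⟶ y from a) ≫ Q.map ψ.s = _
    rw [← Q.map_comp]
    exact (congrArg Q.map ha).symm
end

section
/- Let M and N be triangulated subcategories of a triangulated category T such that every morphism of T from an object of M to an object of N is the zero morphism, and let Q : T → T/N be the Verdier quotient functor. Then the isomorphism closure in T/N of the full image Q(M) (i.e. the full subcategory of T/N of objects isomorphic to Q(m) for some object m of M) is a triangulated subcategory of T/N. -/
open CategoryTheory CategoryTheory.Limits CategoryTheory.Pretriangulated ZeroObject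

universe w v u v₂ u₂ v₃ u₃ v₄ u₄ v₅ u₅ v₆ u₆

/-- Let `M` and `N` be triangulated subcategories of a triangulated
category `C` such that every morphism from an object of `M` to an object of `N` is
zero, and let `Q : C ⥤ D` be the Verdier quotient of `C` by `N`. Then the isomorphism
closure in `D` of the full image `Q(M)` is a triangulated subcategory of `D`. -/
theorem isoClosure_image_is_triangulated_subcategory
    {C : Type u} [Category.{v} C] [HasZeroObject C] [HasShift C ℤ] [Preadditive C]
    [∀ n : ℤ, (shiftFunctor C n).Additive] [Pretriangulated C] [IsTriangulated C]
    {D : Type u₂} [Category.{v₂} D] [HasZeroObject D] [HasShift D ℤ] [Preadditive D]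
    [∀ n : ℤ, (shiftFunctor D n).Additive] [Pretriangulated D] [IsTriangulated D]
    (M N : C → Prop) (hM : IsTriangulatedSub M) (hN : IsTriangulatedSub N)
    (hzero : ∀ (x y : C) (f : x ⟶ y), M x → N y → f = 0)
    (Q : C ⥤ D) [Q.CommShift ℤ] [Q.IsTriangulated] [Q.IsLocalization (coneIn N)] :
    IsTriangulatedSub (fun y : D => ∃ x : C, M x ∧ Nonempty (y ≅ Q.obj x)) := by
  -- the triangulated subcategory associated to `N`
  let S : ObjectProperty C := N
  haveI : S.IsTriangulated :=
    { exists_zero := ⟨0, isZero_zero C, hN.zero 0 (isZero_zero C)⟩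
      isStableUnderShiftBy := fun n => ⟨fun x hx => hN.shift x n hx⟩
      ext₂' := fun T hT h₁ h₃ => ObjectProperty.le_isoClosure _ _ (hN.two_of_three₁₃ T hT h₁ h₃) }
  have hW : S.trW = coneIn N := by
    ext x y f
    constructor
    · rintro ⟨Z, g, h, hT, hZ⟩
      exact ⟨Z, g, h, hT, hZ⟩
    · rintro ⟨Z, g, h, hT, hZ⟩
      exact ⟨Z, g, h, hT, hZ⟩
  have : Q.IsLocalization S.trW := by rw [hW]; infer_instance
  -- every morphism `Q.obj m ⟶ Q.obj y` with `M m` lifts to `C`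
  have key : ∀ (m y : C), M m → ∀ (f : Q.obj m ⟶ Q.obj y),
      ∃ (φ : m ⟶ y), Q.map φ = f := by
    intro m y hm f
    obtain ⟨ρ, hρ⟩ := Localization.exists_rightFraction Q S.trW f
    obtain ⟨Z, g, h, hT, hZ⟩ := ρ.hs
    have hg0 : g = 0 := hzero m Z g hm hZ
    obtain ⟨t, ht⟩ : ∃ t : m ⟶ ρ.X', 𝟙 m = t ≫ ρ.s := Triangle.coyoneda_exact₂ _ hT (𝟙 m) (by simp [hg0]; exact comp_zero)
    have hinv := Localization.inverts Q S.trW ρ.s ρ.hs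
    have hts : t ≫ ρ.s = 𝟙 m := ht.symm
    refine ⟨t ≫ ρ.f, ?_⟩
    rw [hρ]
    dsimp [MorphismProperty.RightFraction.map]
    rw [Q.map_comp]
    congr 1
    exact IsIso.eq_inv_of_inv_hom_id (by rw [← Q.map_comp, hts, Q.map_id])
  set P : D → Prop := fun y : D => ∃ x : C, M x ∧ Nonempty (y ≅ Q.obj x) with hP
  -- basic closure properties
  have iso_closed : ∀ ⦃x y : D⦄, (x ≅ y) → P x → P y := by
    rintro x y e ⟨m, hm, ⟨e'⟩⟩
    exact ⟨m, hm, ⟨e.symm ≪≫ e'⟩⟩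
  have shift : ∀ (x : D) (n : ℤ), P x → P (x⟦n⟧) := by
    rintro x n ⟨m, hm, ⟨e⟩⟩
    exact ⟨m⟦n⟧, hM.shift m n hm,
      ⟨(shiftFunctor D n).mapIso e ≪≫ ((Q.commShiftIso n).app m).symm⟩⟩
  -- the main two-out-of-three case
  have main : ∀ T ∈ distTriang D, P T.obj₁ → P T.obj₂ → P T.obj₃ := by
    rintro T hT ⟨m₁, hm₁, ⟨e₁⟩⟩ ⟨m₂, hm₂, ⟨e₂⟩⟩
    obtain ⟨φ, hφ⟩ := key m₁ m₂ hm₁ (e₁.inv ≫ T.mor₁ ≫ e₂.hom)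
    obtain ⟨z, g, h, hTz⟩ := distinguished_cocone_triangle φ
    have hz : M z := hM.two_of_three₁₂ _ hTz hm₁ hm₂
    have hQT := Q.map_distinguished _ hTz
    have e := isoTriangleOfIso₁₂ T (Q.mapTriangle.obj (Triangle.mk φ g h)) hT hQT
      e₁ e₂ (by
        show T.mor₁ ≫ e₂.hom = e₁.hom ≫ Q.map φ
        rw [hφ]
        simp)
    exact ⟨z, hz, ⟨Triangle.π₃.mapIso e⟩⟩
  refine ⟨iso_closed, ?_, shift, main, ?_, ?_⟩
  · intro x hx
    refine ⟨0, hM.zero 0 (isZero_zero C), ⟨hx.isoZero ≪≫ ?_⟩⟩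
    refine (IsZero.isoZero ?_).symm
    rw [IsZero.iff_id_eq_zero, ← Q.map_id, ← Q.map_zero]
    congr 1
    exact (isZero_zero C).eq_of_src _ _
  · intro T hT h₂ h₃
    have h₁ := main _ (rot_of_distTriang T hT) h₂ h₃
    have := shift _ (-1) h₁
    refine iso_closed ?_ this
    exact (shiftFunctorCompIsoId D (1 : ℤ) (-1) (by omega)).app T.obj₁
  · intro T hT h₁ h₃
    have := main _ (inv_rot_of_distTriang T hT) (shift _ (-1) h₃) h₁
    exact this
end

section
/- Let N and M be triangulated subcategories of a triangulated category T, and assume that the ordered pair (M, N) or the ordered pair (N, M) is factorizable in T. Then the canonical functor M/(N ∩ M) → T/N induced by the inclusion M ↪ T on Verdier quotients is fully faithful, and likewise the canonical functor N/(N ∩ M) → T/M is fully faithful. -/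
open CategoryTheory CategoryTheory.Limits CategoryTheory.Pretriangulated

universe w v u v₂ u₂ v₃ u₃ v₄ u₄ v₅ u₅ v₆ u₆

section VerdierAux

namespace VerdierAux

open ZeroObject

variable {C : Type u} [Category.{v} C] [HasZeroObject C] [HasShift C ℤ]
    [Preadditive C] [∀ n : ℤ, (shiftFunctor C n).Additive] [Pretriangulated C]

/-- The `Triangulated.Subcategory` associated to an `IsTriangulatedSub` predicate. -/
lemma toSub {P : C → Prop} (hP : IsTriangulatedSub P) :
    ObjectProperty.IsTriangulated (C := C) P :=
  haveI : ObjectProperty.IsClosedUnderIsomorphisms (C := C) P := ⟨fun e h => hP.iso_closed e h⟩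
  { exists_zero := ⟨0, isZero_zero C, hP.zero 0 (isZero_zero C)⟩
    isStableUnderShiftBy := fun a => ⟨fun x hx => hP.shift x a hx⟩
    toIsTriangulatedClosed₂ := ObjectProperty.IsTriangulatedClosed₂.mk'
      (fun T hT h₁ h₃ => hP.two_of_three₁₃ T hT h₁ h₃) }

lemma coneIn_eq {P : C → Prop} (hP : IsTriangulatedSub P) :
    coneIn P = ObjectProperty.trW (C := C) P := by
  funext X Y f
  exact propext ⟨fun ⟨Z, g, h, hT, hZ⟩ => ⟨Z, g, h, hT, hZ⟩,
    fun ⟨Z, g, h, hT, hZ⟩ => ⟨Z, g, h, hT, hZ⟩⟩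

lemma inter {N M : C → Prop} (hN : IsTriangulatedSub N) (hM : IsTriangulatedSub M) :
    IsTriangulatedSub (fun z => N z ∧ M z) where
  iso_closed _ _ e h := ⟨hN.iso_closed e h.1, hM.iso_closed e h.2⟩
  zero x hx := ⟨hN.zero x hx, hM.zero x hx⟩
  shift x n h := ⟨hN.shift x n h.1, hM.shift x n h.2⟩
  two_of_three₁₂ T hT h₁ h₂ := ⟨hN.two_of_three₁₂ T hT h₁.1 h₂.1, hM.two_of_three₁₂ T hT h₁.2 h₂.2⟩
  two_of_three₂₃ T hT h₁ h₂ := ⟨hN.two_of_three₂₃ T hT h₁.1 h₂.1, hM.two_of_three₂₃ T hT h₁.2 h₂.2⟩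
  two_of_three₁₃ T hT h₁ h₂ := ⟨hN.two_of_three₁₃ T hT h₁.1 h₂.1, hM.two_of_three₁₃ T hT h₁.2 h₂.2⟩

lemma coneIn_le {P Q : C → Prop} (h : ∀ z, P z → Q z) {X Y : C} {f : X ⟶ Y}
    (hf : coneIn P f) : coneIn Q f := by
  obtain ⟨Z, g, hh, hT, hZ⟩ := hf
  exact ⟨Z, g, hh, hT, h Z hZ⟩

/-- view a morphism of `C` as a morphism of a full subcategory -/
abbrev homMk {M : C → Prop} {x y : ObjectProperty.FullSubcategory M} (f : x.obj ⟶ y.obj) : x ⟶ y :=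
  ObjectProperty.homMk f

lemma cofinal_left {N M : C → Prop} (hM : IsTriangulatedSub M)
    (hfac : Factorizable N M) {y Y' : C} (hy : M y) {s : y ⟶ Y'} (hs : coneIn N s) :
    ∃ (Y'' : C) (w : Y' ⟶ Y''), M Y'' ∧ coneIn (fun z => N z ∧ M z) (s ≫ w) := by
  obtain ⟨n, g, h, hT, hn⟩ := hs
  obtain ⟨z, za, zb, ⟨hzN, hzM⟩, hab⟩ := hfac n (y⟦(1 : ℤ)⟧) h hn (hM.shift y 1 hy)
  obtain ⟨Y'', s', g', hT₂⟩ := distinguished_cocone_triangle₂ zb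
  obtain ⟨w, hw₁, hw₂⟩ : ∃ w : Y' ⟶ Y'', s ≫ w = 𝟙 y ≫ s' ∧ g ≫ za = w ≫ g' :=
    complete_distinguished_triangle_morphism₂ _ _ hT hT₂ (𝟙 y) za
    (show h ≫ (𝟙 y)⟦(1 : ℤ)⟧' = za ≫ zb by
      simp only [CategoryTheory.Functor.map_id, Category.comp_id]; exact hab.symm)
  have hsw : s ≫ w = s' := by simpa using hw₁
  refine ⟨Y'', w, hM.two_of_three₁₃ _ hT₂ hy hzM, z, g', zb, ?_, hzN, hzM⟩
  rw [hsw]; exact hT₂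

lemma cofinal_right {N M : C → Prop} (hM : IsTriangulatedSub M)
    (hfac : Factorizable M N) {Y' y : C} (hy : M y) {s : Y' ⟶ y} (hs : coneIn N s) :
    ∃ (Y'' : C) (w : Y'' ⟶ Y'), M Y'' ∧ coneIn (fun z => N z ∧ M z) (w ≫ s) := by
  obtain ⟨n, g, h, hT, hn⟩ := hs
  obtain ⟨z, za, zb, ⟨hzM, hzN⟩, hab⟩ := hfac y n g hy hn
  obtain ⟨Y'', f, h', hT₂⟩ := distinguished_cocone_triangle₁ za
  obtain ⟨w, hw₁, hw₂⟩ : ∃ w : Y'' ⟶ Y', f ≫ 𝟙 y = w ≫ s ∧ h' ≫ w⟦(1 : ℤ)⟧' = zb ≫ h :=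
    complete_distinguished_triangle_morphism₁ _ _ hT₂ hT (𝟙 y) zb
    (show za ≫ zb = 𝟙 y ≫ g by rw [Category.id_comp, hab])
  have hws : w ≫ s = f := by simpa using hw₁.symm
  refine ⟨Y'', w, hM.two_of_three₂₃ _ hT₂ hy hzM, z, za, h', ?_, hzN, hzM⟩
  rw [hws]; exact hT₂

lemma V_hasLeft {I M : C → Prop} (hM : IsTriangulatedSub M) (hIM : ∀ z, I z → M z)
    [(coneIn I).HasLeftCalculusOfFractions] :
    ((coneIn I).inverseImage (ObjectProperty.ι M)).HasLeftCalculusOfFractions where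
  toIsMultiplicative :=
    { id_mem := fun X => (coneIn I).id_mem X.obj
      comp_mem := fun f g hf hg => (coneIn I).comp_mem _ _ hf hg }
  exists_leftFraction X Y φ := by
    obtain ⟨ψ, hψ⟩ := (MorphismProperty.RightFraction.mk
      (show φ.X'.obj ⟶ X.obj from φ.s.hom) φ.hs (show φ.X'.obj ⟶ Y.obj from φ.f.hom)).exists_leftFraction
    obtain ⟨Z, g, h, hT, hZ⟩ := ψ.hs
    have hY' : M ψ.Y' := hM.two_of_three₁₃ _ hT Y.2 (hIM _ hZ)
    exact ⟨MorphismProperty.LeftFraction.mk (Y' := ⟨ψ.Y', hY'⟩) (homMk ψ.f) (homMk ψ.s) ψ.hs,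
        by ext; exact hψ⟩
  ext X' X Y f₁ f₂ s hs hcomp := by
    obtain ⟨Z', t, ht, hft⟩ := MorphismProperty.HasLeftCalculusOfFractions.ext
      (W := coneIn I) (show X.obj ⟶ Y.obj from f₁.hom) f₂.hom (show X'.obj ⟶ X.obj from s.hom) hs
        (congrArg (·.hom) hcomp)
    obtain ⟨Z, g, h, hT, hZ⟩ := id ht
    have hZ' : M Z' := hM.two_of_three₁₃ _ hT Y.2 (hIM _ hZ)
    exact ⟨⟨Z', hZ'⟩, homMk t, ht, by ext; exact hft⟩

lemma V_hasRight {I M : C → Prop} (hM : IsTriangulatedSub M) (hIM : ∀ z, I z → M z)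
    [(coneIn I).HasRightCalculusOfFractions] :
    ((coneIn I).inverseImage (ObjectProperty.ι M)).HasRightCalculusOfFractions where
  toIsMultiplicative :=
    { id_mem := fun X => (coneIn I).id_mem X.obj
      comp_mem := fun f g hf hg => (coneIn I).comp_mem _ _ hf hg }
  exists_rightFraction X Y φ := by
    obtain ⟨ψ, hψ⟩ := (MorphismProperty.LeftFraction.mk
      (show X.obj ⟶ φ.Y'.obj from φ.f.hom) (show Y.obj ⟶ φ.Y'.obj from φ.s.hom)
        φ.hs).exists_rightFraction
    obtain ⟨Z, g, h, hT, hZ⟩ := ψ.hs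
    have hX' : M ψ.X' := hM.two_of_three₂₃ _ hT X.2 (hIM _ hZ)
    exact ⟨MorphismProperty.RightFraction.mk (X' := ⟨ψ.X', hX'⟩) (homMk ψ.s) ψ.hs (homMk ψ.f),
        by ext; exact hψ⟩
  ext X Y Y' f₁ f₂ s hs hcomp := by
    obtain ⟨Z', t, ht, hft⟩ := MorphismProperty.HasRightCalculusOfFractions.ext
      (W := coneIn I) (show X.obj ⟶ Y.obj from f₁.hom) f₂.hom (show Y.obj ⟶ Y'.obj from s.hom) hs
        (congrArg (·.hom) hcomp)
    obtain ⟨Z, g, h, hT, hZ⟩ := id ht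
    have hZ' : M Z' := hM.two_of_three₂₃ _ hT X.2 (hIM _ hZ)
    exact ⟨⟨Z', hZ'⟩, homMk t, ht, by ext; exact hft⟩


lemma master_left {C : Type u} [Category.{v} C] [HasZeroObject C] [HasShift C ℤ]
    [Preadditive C] [∀ n : ℤ, (shiftFunctor C n).Additive] [Pretriangulated C]
    [IsTriangulated C]
    (N M : C → Prop) (hN : IsTriangulatedSub N) (hM : IsTriangulatedSub M)
    (hfac : Factorizable N M)
    {D₁ : Type u₂} [Category.{v₂} D₁] (Q₁ : ObjectProperty.FullSubcategory M ⥤ D₁)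
    [Q₁.IsLocalization ((coneIn (fun z => N z ∧ M z)).inverseImage
      (ObjectProperty.ι M))]
    {D₂ : Type u₃} [Category.{v₃} D₂] (Q₂ : C ⥤ D₂) [Q₂.IsLocalization (coneIn N)]
    (F : D₁ ⥤ D₂) (e : Q₁ ⋙ F ≅ ObjectProperty.ι M ⋙ Q₂) :
    F.Full ∧ F.Faithful := by
  haveI : (coneIn N).HasLeftCalculusOfFractions := by
    rw [coneIn_eq hN]; haveI := toSub hN; infer_instance
  haveI : (coneIn (fun z => N z ∧ M z)).HasLeftCalculusOfFractions := by
    rw [coneIn_eq (inter hN hM)]; haveI := toSub (inter hN hM); infer_instance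
  haveI : ((coneIn (fun z => N z ∧ M z)).inverseImage
      (ObjectProperty.ι M)).HasLeftCalculusOfFractions :=
    V_hasLeft hM (fun _ hz => hz.2)
  haveI := Localization.essSurj Q₁ ((coneIn (fun z => N z ∧ M z)).inverseImage
      (ObjectProperty.ι M))
  have key : ∀ {x y : ObjectProperty.FullSubcategory M} (g : x ⟶ y),
      F.map (Q₁.map g) = e.hom.app x ≫ Q₂.map ((ObjectProperty.ι M).map g)
        ≫ e.inv.app y := by
    intro x y g
    have h := e.hom.naturality g
    dsimp at h ⊢
    rw [← Category.assoc, ← h]; simp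
  have key2 : ∀ {x y : ObjectProperty.FullSubcategory M} (g₁ g₂ : x ⟶ y),
      F.map (Q₁.map g₁) = F.map (Q₁.map g₂) →
        Q₂.map ((ObjectProperty.ι M).map g₁)
          = Q₂.map ((ObjectProperty.ι M).map g₂) := by
    intro x y g₁ g₂ hg
    rw [key g₁, key g₂] at hg
    simp only [← Category.assoc] at hg
    have hg' := (cancel_mono (e.inv.app y)).1 hg
    exact (cancel_epi (e.hom.app x)).1 (by simpa using hg')
  constructor
  · -- Full
    refine ⟨fun {A B} ψ => ?_⟩
    obtain ⟨x, ⟨eA⟩⟩ : ∃ x, Nonempty (Q₁.obj x ≅ A) := ⟨_, ⟨Q₁.objObjPreimageIso A⟩⟩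
    obtain ⟨y, ⟨eB⟩⟩ : ∃ y, Nonempty (Q₁.obj y ≅ B) := ⟨_, ⟨Q₁.objObjPreimageIso B⟩⟩
    obtain ⟨φ, hφ⟩ := Localization.exists_leftFraction Q₂ (coneIn N)
      (e.inv.app x ≫ (F.map eA.hom ≫ ψ ≫ F.map eB.inv) ≫ e.hom.app y)
    obtain ⟨Y'', w, hY''M, hcone⟩ := cofinal_left hM hfac y.2 φ.hs
    let y'' : ObjectProperty.FullSubcategory M := ⟨Y'', hY''M⟩
    let f' : x ⟶ y'' := homMk (φ.f ≫ w)
    let s' : y ⟶ y'' := homMk (φ.s ≫ w)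
    have hs' : ((coneIn (fun z => N z ∧ M z)).inverseImage
        (ObjectProperty.ι M)) s' := hcone
    haveI : IsIso (Q₁.map s') := Localization.inverts Q₁
      ((coneIn (fun z => N z ∧ M z)).inverseImage (ObjectProperty.ι M)) s' hs'
    refine ⟨eA.inv ≫ Q₁.map f' ≫ inv (Q₁.map s') ≫ eB.hom, ?_⟩
    have hbig : (F.map eA.hom ≫ ψ ≫ F.map eB.inv) ≫ e.hom.app y
        = e.hom.app x ≫ φ.map Q₂ (Localization.inverts Q₂ (coneIn N)) := by
      rw [← hφ]; simp
    have hbig' : ∀ {T : D₂} (X : Q₂.obj y.obj ⟶ T),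
        (F.map eA.hom ≫ ψ ≫ F.map eB.inv) ≫ e.hom.app y ≫ X
          = e.hom.app x ≫ φ.map Q₂ (Localization.inverts Q₂ (coneIn N)) ≫ X := by
      intro T X
      rw [← Category.assoc, hbig, Category.assoc]
    have hιf : (ObjectProperty.ι M).map f' = φ.f ≫ w := rfl
    have hιs : (ObjectProperty.ι M).map s' = φ.s ≫ w := rfl
    have hfs' : φ.map Q₂ (Localization.inverts Q₂ (coneIn N))
        ≫ Q₂.map (φ.s ≫ w) ≫ e.inv.app y''
          = Q₂.map (φ.f ≫ w) ≫ e.inv.app y'' := by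
      rw [Q₂.map_comp, Q₂.map_comp]
      simp only [Category.assoc]
      rw [MorphismProperty.LeftFraction.map_comp_map_s_assoc]
    have hmain : F.map (Q₁.map f') ≫ inv (F.map (Q₁.map s'))
        = F.map eA.hom ≫ ψ ≫ F.map eB.inv := by
      rw [IsIso.comp_inv_eq, key f', key s', hιf, hιs, hbig', hfs']
    have hmain' : ∀ {T : D₂} (X : F.obj (Q₁.obj y) ⟶ T),
        F.map (Q₁.map f') ≫ inv (F.map (Q₁.map s')) ≫ X
          = (F.map eA.hom ≫ ψ ≫ F.map eB.inv) ≫ X := by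
      intro T X
      rw [← Category.assoc, hmain]
    simp only [Functor.map_comp, Functor.map_inv]
    rw [hmain']
    simp
  · -- Faithful
    suffices H : ∀ (x y : ObjectProperty.FullSubcategory M) (γ₁ γ₂ : Q₁.obj x ⟶ Q₁.obj y),
        F.map γ₁ = F.map γ₂ → γ₁ = γ₂ by
      refine ⟨fun {A B} ψ₁ ψ₂ h => ?_⟩
      obtain ⟨x, ⟨eA⟩⟩ : ∃ x, Nonempty (Q₁.obj x ≅ A) := ⟨_, ⟨Q₁.objObjPreimageIso A⟩⟩
      obtain ⟨y, ⟨eB⟩⟩ : ∃ y, Nonempty (Q₁.obj y ≅ B) := ⟨_, ⟨Q₁.objObjPreimageIso B⟩⟩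
      have := H x y (eA.hom ≫ ψ₁ ≫ eB.inv) (eA.hom ≫ ψ₂ ≫ eB.inv)
        (by simp only [Functor.map_comp, h])
      have h₁ : ψ₁ = eA.inv ≫ (eA.hom ≫ ψ₁ ≫ eB.inv) ≫ eB.hom := by simp
      have h₂ : ψ₂ = eA.inv ≫ (eA.hom ≫ ψ₂ ≫ eB.inv) ≫ eB.hom := by simp
      rw [h₁, h₂, this]
    intro x y γ₁ γ₂ hFγ
    obtain ⟨φ₁, rfl⟩ := Localization.exists_leftFraction Q₁
      ((coneIn (fun z => N z ∧ M z)).inverseImage (ObjectProperty.ι M)) γ₁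
    obtain ⟨φ₂, rfl⟩ := Localization.exists_leftFraction Q₁
      ((coneIn (fun z => N z ∧ M z)).inverseImage (ObjectProperty.ι M)) γ₂
    obtain ⟨ψ, hψ⟩ := (MorphismProperty.RightFraction.mk φ₁.s φ₁.hs
      φ₂.s).exists_leftFraction
    have ht : ((coneIn (fun z => N z ∧ M z)).inverseImage
        (ObjectProperty.ι M)) (φ₁.s ≫ ψ.f) := by
      rw [show φ₁.s ≫ ψ.f = φ₂.s ≫ ψ.s from hψ.symm]
      exact MorphismProperty.comp_mem _ _ _ φ₂.hs ψ.hs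
    haveI : IsIso (Q₁.map (φ₁.s ≫ ψ.f)) := Localization.inverts Q₁
      ((coneIn (fun z => N z ∧ M z)).inverseImage (ObjectProperty.ι M)) _ ht
    have h₁ : φ₁.map Q₁ (Localization.inverts _ _) ≫ Q₁.map (φ₁.s ≫ ψ.f)
        = Q₁.map (φ₁.f ≫ ψ.f) := by
      rw [Q₁.map_comp, Q₁.map_comp, MorphismProperty.LeftFraction.map_comp_map_s_assoc]
    have h₂ : φ₂.map Q₁ (Localization.inverts _ _) ≫ Q₁.map (φ₁.s ≫ ψ.f)
        = Q₁.map (φ₂.f ≫ ψ.s) := by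
      rw [show φ₁.s ≫ ψ.f = φ₂.s ≫ ψ.s from hψ.symm, Q₁.map_comp, Q₁.map_comp,
        MorphismProperty.LeftFraction.map_comp_map_s_assoc]
    suffices hQ : Q₁.map (φ₁.f ≫ ψ.f) = Q₁.map (φ₂.f ≫ ψ.s) by
      rw [← cancel_mono (Q₁.map (φ₁.s ≫ ψ.f)), h₁, h₂, hQ]
    have hF2 : F.map (Q₁.map (φ₁.f ≫ ψ.f)) = F.map (Q₁.map (φ₂.f ≫ ψ.s)) := by
      rw [← h₁, ← h₂, F.map_comp, F.map_comp, hFγ]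
    have hQ₂ := key2 _ _ hF2
    rw [MorphismProperty.map_eq_iff_postcomp Q₂ (coneIn N)] at hQ₂
    obtain ⟨Z, r, hr, hrr⟩ := hQ₂
    obtain ⟨Z', w, hZ'M, hcone⟩ := cofinal_left hM hfac ψ.Y'.2 hr
    have hrV : ((coneIn (fun z => N z ∧ M z)).inverseImage
        (ObjectProperty.ι M)) (homMk (r ≫ w) : ψ.Y' ⟶ ⟨Z', hZ'M⟩) := hcone
    haveI : IsIso (Q₁.map (homMk (r ≫ w) : ψ.Y' ⟶ ⟨Z', hZ'M⟩)) :=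
      Localization.inverts Q₁ _ _ hrV
    rw [← cancel_mono (Q₁.map (homMk (r ≫ w) : ψ.Y' ⟶ ⟨Z', hZ'M⟩)),
      ← Q₁.map_comp, ← Q₁.map_comp]
    congr 1
    ext
    show (ObjectProperty.ι M).map (φ₁.f ≫ ψ.f) ≫ (r ≫ w)
      = (ObjectProperty.ι M).map (φ₂.f ≫ ψ.s) ≫ (r ≫ w)
    rw [← Category.assoc, ← Category.assoc, hrr]

lemma master_right {C : Type u} [Category.{v} C] [HasZeroObject C] [HasShift C ℤ]
    [Preadditive C] [∀ n : ℤ, (shiftFunctor C n).Additive] [Pretriangulated C]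
    [IsTriangulated C]
    (N M : C → Prop) (hN : IsTriangulatedSub N) (hM : IsTriangulatedSub M)
    (hfac : Factorizable M N)
    {D₁ : Type u₂} [Category.{v₂} D₁] (Q₁ : ObjectProperty.FullSubcategory M ⥤ D₁)
    [Q₁.IsLocalization ((coneIn (fun z => N z ∧ M z)).inverseImage
      (ObjectProperty.ι M))]
    {D₂ : Type u₃} [Category.{v₃} D₂] (Q₂ : C ⥤ D₂) [Q₂.IsLocalization (coneIn N)]
    (F : D₁ ⥤ D₂) (e : Q₁ ⋙ F ≅ ObjectProperty.ι M ⋙ Q₂) :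
    F.Full ∧ F.Faithful := by
  haveI : (coneIn N).HasRightCalculusOfFractions := by
    rw [coneIn_eq hN]; haveI := toSub hN; infer_instance
  haveI : (coneIn (fun z => N z ∧ M z)).HasRightCalculusOfFractions := by
    rw [coneIn_eq (inter hN hM)]; haveI := toSub (inter hN hM); infer_instance
  haveI : ((coneIn (fun z => N z ∧ M z)).inverseImage
      (ObjectProperty.ι M)).HasRightCalculusOfFractions :=
    V_hasRight hM (fun _ hz => hz.2)
  haveI := Localization.essSurj Q₁ ((coneIn (fun z => N z ∧ M z)).inverseImage
      (ObjectProperty.ι M))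
  have key : ∀ {x y : ObjectProperty.FullSubcategory M} (g : x ⟶ y),
      F.map (Q₁.map g) = e.hom.app x ≫ Q₂.map ((ObjectProperty.ι M).map g)
        ≫ e.inv.app y := by
    intro x y g
    have h := e.hom.naturality g
    dsimp at h ⊢
    rw [← Category.assoc, ← h]; simp
  have key2 : ∀ {x y : ObjectProperty.FullSubcategory M} (g₁ g₂ : x ⟶ y),
      F.map (Q₁.map g₁) = F.map (Q₁.map g₂) →
        Q₂.map ((ObjectProperty.ι M).map g₁)
          = Q₂.map ((ObjectProperty.ι M).map g₂) := by
    intro x y g₁ g₂ hg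
    rw [key g₁, key g₂] at hg
    simp only [← Category.assoc] at hg
    have hg' := (cancel_mono (e.inv.app y)).1 hg
    exact (cancel_epi (e.hom.app x)).1 (by simpa using hg')
  constructor
  · -- Full
    refine ⟨fun {A B} ψ => ?_⟩
    obtain ⟨x, ⟨eA⟩⟩ : ∃ x, Nonempty (Q₁.obj x ≅ A) := ⟨_, ⟨Q₁.objObjPreimageIso A⟩⟩
    obtain ⟨y, ⟨eB⟩⟩ : ∃ y, Nonempty (Q₁.obj y ≅ B) := ⟨_, ⟨Q₁.objObjPreimageIso B⟩⟩
    obtain ⟨φ, hφ⟩ := Localization.exists_rightFraction Q₂ (coneIn N)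
      (e.inv.app x ≫ (F.map eA.hom ≫ ψ ≫ F.map eB.inv) ≫ e.hom.app y)
    obtain ⟨Y'', w, hY''M, hcone⟩ := cofinal_right hM hfac x.2 φ.hs
    let x'' : ObjectProperty.FullSubcategory M := ⟨Y'', hY''M⟩
    let f' : x'' ⟶ y := homMk (w ≫ φ.f)
    let s' : x'' ⟶ x := homMk (w ≫ φ.s)
    have hs' : ((coneIn (fun z => N z ∧ M z)).inverseImage
        (ObjectProperty.ι M)) s' := hcone
    haveI : IsIso (Q₁.map s') := Localization.inverts Q₁
      ((coneIn (fun z => N z ∧ M z)).inverseImage (ObjectProperty.ι M)) s' hs'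
    refine ⟨eA.inv ≫ inv (Q₁.map s') ≫ Q₁.map f' ≫ eB.hom, ?_⟩
    have hbig : e.inv.app x ≫ F.map eA.hom ≫ ψ ≫ F.map eB.inv
        = φ.map Q₂ (Localization.inverts Q₂ (coneIn N)) ≫ e.inv.app y := by
      rw [← hφ]; simp
    have hιf : (ObjectProperty.ι M).map f' = w ≫ φ.f := rfl
    have hιs : (ObjectProperty.ι M).map s' = w ≫ φ.s := rfl
    have hfs' : Q₂.map (w ≫ φ.s) ≫ φ.map Q₂ (Localization.inverts Q₂ (coneIn N))
        ≫ e.inv.app y = Q₂.map (w ≫ φ.f) ≫ e.inv.app y := by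
      rw [Q₂.map_comp, Q₂.map_comp]
      simp only [Category.assoc]
      rw [MorphismProperty.RightFraction.map_s_comp_map_assoc]
    have hmain : inv (F.map (Q₁.map s')) ≫ F.map (Q₁.map f')
        = F.map eA.hom ≫ ψ ≫ F.map eB.inv := by
      rw [IsIso.inv_comp_eq, key f', key s', hιf, hιs]
      simp only [Category.assoc]
      rw [hbig, hfs']
    have hmain' : ∀ {T : D₂} (X : F.obj (Q₁.obj y) ⟶ T),
        inv (F.map (Q₁.map s')) ≫ F.map (Q₁.map f') ≫ X
          = (F.map eA.hom ≫ ψ ≫ F.map eB.inv) ≫ X := by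
      intro T X
      rw [← Category.assoc, hmain]
    simp only [Functor.map_comp, Functor.map_inv]
    rw [hmain']
    simp
  · -- Faithful
    suffices H : ∀ (x y : ObjectProperty.FullSubcategory M) (γ₁ γ₂ : Q₁.obj x ⟶ Q₁.obj y),
        F.map γ₁ = F.map γ₂ → γ₁ = γ₂ by
      refine ⟨fun {A B} ψ₁ ψ₂ h => ?_⟩
      obtain ⟨x, ⟨eA⟩⟩ : ∃ x, Nonempty (Q₁.obj x ≅ A) := ⟨_, ⟨Q₁.objObjPreimageIso A⟩⟩
      obtain ⟨y, ⟨eB⟩⟩ : ∃ y, Nonempty (Q₁.obj y ≅ B) := ⟨_, ⟨Q₁.objObjPreimageIso B⟩⟩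
      have := H x y (eA.hom ≫ ψ₁ ≫ eB.inv) (eA.hom ≫ ψ₂ ≫ eB.inv)
        (by simp only [Functor.map_comp, h])
      have h₁ : ψ₁ = eA.inv ≫ (eA.hom ≫ ψ₁ ≫ eB.inv) ≫ eB.hom := by simp
      have h₂ : ψ₂ = eA.inv ≫ (eA.hom ≫ ψ₂ ≫ eB.inv) ≫ eB.hom := by simp
      rw [h₁, h₂, this]
    intro x y γ₁ γ₂ hFγ
    obtain ⟨φ₁, rfl⟩ := Localization.exists_rightFraction Q₁
      ((coneIn (fun z => N z ∧ M z)).inverseImage (ObjectProperty.ι M)) γ₁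
    obtain ⟨φ₂, rfl⟩ := Localization.exists_rightFraction Q₁
      ((coneIn (fun z => N z ∧ M z)).inverseImage (ObjectProperty.ι M)) γ₂
    obtain ⟨ψ, hψ⟩ := (MorphismProperty.LeftFraction.mk φ₁.s φ₂.s
      φ₂.hs).exists_rightFraction
    have ht : ((coneIn (fun z => N z ∧ M z)).inverseImage
        (ObjectProperty.ι M)) (ψ.s ≫ φ₁.s) :=
      MorphismProperty.comp_mem _ _ _ ψ.hs φ₁.hs
    haveI : IsIso (Q₁.map (ψ.s ≫ φ₁.s)) := Localization.inverts Q₁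
      ((coneIn (fun z => N z ∧ M z)).inverseImage (ObjectProperty.ι M)) _ ht
    have h₁ : Q₁.map (ψ.s ≫ φ₁.s) ≫ φ₁.map Q₁ (Localization.inverts _ _)
        = Q₁.map (ψ.s ≫ φ₁.f) := by
      rw [Q₁.map_comp, Q₁.map_comp, Category.assoc,
        MorphismProperty.RightFraction.map_s_comp_map]
    have h₂ : Q₁.map (ψ.s ≫ φ₁.s) ≫ φ₂.map Q₁ (Localization.inverts _ _)
        = Q₁.map (ψ.f ≫ φ₂.f) := by
      rw [show ψ.s ≫ φ₁.s = ψ.f ≫ φ₂.s from hψ, Q₁.map_comp, Q₁.map_comp,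
        Category.assoc, MorphismProperty.RightFraction.map_s_comp_map]
    suffices hQ : Q₁.map (ψ.s ≫ φ₁.f) = Q₁.map (ψ.f ≫ φ₂.f) by
      rw [← cancel_epi (Q₁.map (ψ.s ≫ φ₁.s)), h₁, h₂, hQ]
    have hF2 : F.map (Q₁.map (ψ.s ≫ φ₁.f)) = F.map (Q₁.map (ψ.f ≫ φ₂.f)) := by
      rw [← h₁, ← h₂, F.map_comp, F.map_comp, hFγ]
    have hQ₂ := key2 _ _ hF2
    rw [MorphismProperty.map_eq_iff_precomp Q₂ (coneIn N)] at hQ₂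
    obtain ⟨Z, r, hr, hrr⟩ := hQ₂
    obtain ⟨Z', w, hZ'M, hcone⟩ := cofinal_right hM hfac ψ.X'.2 hr
    have hrV : ((coneIn (fun z => N z ∧ M z)).inverseImage
        (ObjectProperty.ι M))
          (homMk (w ≫ r) : (⟨Z', hZ'M⟩ : ObjectProperty.FullSubcategory M) ⟶ ψ.X') := hcone
    haveI : IsIso (Q₁.map (homMk (w ≫ r) :
        (⟨Z', hZ'M⟩ : ObjectProperty.FullSubcategory M) ⟶ ψ.X')) :=
      Localization.inverts Q₁ _ _ hrV
    rw [← cancel_epi (Q₁.map (homMk (w ≫ r) :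
        (⟨Z', hZ'M⟩ : ObjectProperty.FullSubcategory M) ⟶ ψ.X')),
      ← Q₁.map_comp, ← Q₁.map_comp]
    congr 1
    ext
    show (w ≫ r) ≫ (ObjectProperty.ι M).map (ψ.s ≫ φ₁.f)
      = (w ≫ r) ≫ (ObjectProperty.ι M).map (ψ.f ≫ φ₂.f)
    rw [Category.assoc, Category.assoc, hrr]

end VerdierAux

end VerdierAux


/-- Let `N` and `M` be triangulated subcategories of a triangulated
category `C` such that `(M, N)` or `(N, M)` is factorizable. Then the canonical functor
`M/(N ∩ M) → C/N` induced by the inclusion `M ↪ C` on Verdier quotients is fully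
faithful, and likewise the canonical functor `N/(N ∩ M) → C/M` is fully faithful.
Here `M/(N ∩ M)` is modelled by a localization `Q₁` of the full subcategory `M` at the
morphisms whose cone (computed in `C`) lies in `N ∩ M`, `C/N` by a localization `Q₂`
of `C` at the morphisms with cone in `N`, and the canonical functor by any functor `F`
with `Q₁ ⋙ F ≅ (M ↪ C) ⋙ Q₂`; similarly for the other quotient. -/
theorem canonical_functor_between_quotients_fully_faithful
    {C : Type u} [Category.{v} C] [HasZeroObject C] [HasShift C ℤ] [Preadditive C]
    [∀ n : ℤ, (shiftFunctor C n).Additive] [Pretriangulated C] [IsTriangulated C]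
    (N M : C → Prop) (hN : IsTriangulatedSub N) (hM : IsTriangulatedSub M)
    (hfac : Factorizable M N ∨ Factorizable N M)
    {D₁ : Type u₂} [Category.{v₂} D₁] (Q₁ : ObjectProperty.FullSubcategory M ⥤ D₁)
    [Q₁.IsLocalization ((coneIn (fun z => N z ∧ M z)).inverseImage
      (ObjectProperty.ι M))]
    {D₂ : Type u₃} [Category.{v₃} D₂] (Q₂ : C ⥤ D₂) [Q₂.IsLocalization (coneIn N)]
    (F : D₁ ⥤ D₂) (hF : Nonempty (Q₁ ⋙ F ≅ ObjectProperty.ι M ⋙ Q₂))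
    {D₃ : Type u₄} [Category.{v₄} D₃] (Q₃ : ObjectProperty.FullSubcategory N ⥤ D₃)
    [Q₃.IsLocalization ((coneIn (fun z => N z ∧ M z)).inverseImage
      (ObjectProperty.ι N))]
    {D₄ : Type u₅} [Category.{v₅} D₄] (Q₄ : C ⥤ D₄) [Q₄.IsLocalization (coneIn M)]
    (G : D₃ ⥤ D₄) (hG : Nonempty (Q₃ ⋙ G ≅ ObjectProperty.ι N ⋙ Q₄)) :
    (F.Full ∧ F.Faithful) ∧ (G.Full ∧ G.Faithful) := by
  obtain ⟨eF⟩ := hF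
  obtain ⟨eG⟩ := hG
  have hswap : (fun z => M z ∧ N z) = (fun z => N z ∧ M z) :=
    funext fun z => propext and_comm
  haveI : Q₃.IsLocalization ((coneIn (fun z => M z ∧ N z)).inverseImage
      (ObjectProperty.ι N)) := by
    rw [hswap]; infer_instance
  constructor
  · rcases hfac with h | h
    · exact VerdierAux.master_right N M hN hM h Q₁ Q₂ F eF
    · exact VerdierAux.master_left N M hN hM h Q₁ Q₂ F eF
  · rcases hfac with h | h
    · exact VerdierAux.master_left M N hM hN h Q₃ Q₄ G eG
    · exact VerdierAux.master_right M N hM hN h Q₃ Q₄ G eG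
end

section
/- Let N and M be triangulated subcategories of an essentially small triangulated category T and Q : T → T/N the Verdier quotient functor. Then the smallest thick subcategory N ∨_thi M of T containing both N and M equals the thick closure of the preimage Q^{-1}(im(Q|_M)), where im(Q|_M) is the smallest triangulated subcategory of T/N containing Q(m) for all objects m of M, Q^{-1} denotes the preimage full subcategory, and the thick closure is the smallest thick subcategory containing a given full subcategory. -/
open CategoryTheory CategoryTheory.Limits CategoryTheory.Pretriangulated

universe w v u v₂ u₂ v₃ u₃ v₄ u₄ v₅ u₅ v₆ u₆

/-- The triangulated closure of a family `S` of objects: the smallest triangulated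
subcategory containing `S`, realized as the intersection of all triangulated
subcategories containing `S`. -/
def triClosure {C : Type u} [Category.{v} C] [HasZeroObject C] [HasShift C ℤ]
    [Preadditive C] [∀ n : ℤ, (shiftFunctor C n).Additive] [Pretriangulated C]
    (S : C → Prop) : C → Prop :=
  fun x => ∀ P : C → Prop, IsTriangulatedSub P → (∀ z, S z → P z) → P x

/-- The thick closure of a family `S` of objects: the smallest thick subcategory
containing `S`, realized as the intersection of all thick subcategories containing
`S`. -/
def thickClosure {C : Type u} [Category.{v} C] [HasZeroObject C] [HasShift C ℤ]
    [Preadditive C] [∀ n : ℤ, (shiftFunctor C n).Additive] [Pretriangulated C]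
    [HasBinaryBiproducts C] (S : C → Prop) : C → Prop :=
  fun x => ∀ P : C → Prop, IsTriangulatedSub P → IsSummandClosed P →
    (∀ z, S z → P z) → P x

section Auxiliary

open ZeroObject

variable {C : Type u} [Category.{v} C] [HasZeroObject C] [HasShift C ℤ] [Preadditive C]
    [∀ n : ℤ, (shiftFunctor C n).Additive] [Pretriangulated C] [IsTriangulated C]
    [HasBinaryBiproducts C]
    {D : Type u₂} [Category.{v₂} D] [HasZeroObject D] [HasShift D ℤ] [Preadditive D]
    [∀ n : ℤ, (shiftFunctor D n).Additive] [Pretriangulated D]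

/-- The mathlib triangulated subcategory associated to an `IsTriangulatedSub` predicate. -/
lemma subOfIsTriangulatedSub (N : C → Prop) (hN : IsTriangulatedSub N) :
    ObjectProperty.IsTriangulated (C := C) N where
  exists_zero := ⟨0, isZero_zero C, hN.zero 0 (isZero_zero C)⟩
  isStableUnderShiftBy a := ⟨fun X hX => hN.shift X a hX⟩
  ext₂' T hT h₁ h₃ := ObjectProperty.le_isoClosure _ _ (hN.two_of_three₁₃ T hT h₁ h₃)

lemma coneIn_eq_W (N : C → Prop) (hN : IsTriangulatedSub N) :
    coneIn N = ObjectProperty.trW (C := C) N := by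
  ext X Y f
  constructor
  · rintro ⟨Z, g, h, hT, hZ⟩
    exact ⟨Z, g, h, hT, hZ⟩
  · rintro ⟨Z, g, h, hT, hZ⟩
    exact ⟨Z, g, h, hT, hZ⟩

lemma coneIn_hasLeftCalculusOfFractions (N : C → Prop) (hN : IsTriangulatedSub N) :
    (coneIn N).HasLeftCalculusOfFractions := by
  rw [coneIn_eq_W N hN]
  haveI := subOfIsTriangulatedSub N hN
  infer_instance

variable (N : C → Prop) (hN : IsTriangulatedSub N)
    (Q : C ⥤ D) [Q.CommShift ℤ] [Q.IsTriangulated] [Q.IsLocalization (coneIn N)]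
    (P : C → Prop) (hP : IsTriangulatedSub P) (hPs : IsSummandClosed P)
    (hNP : ∀ z, N z → P z)

include hN hP hPs hNP in
lemma mem_of_isZero_obj (c : C) (hc : IsZero (Q.obj c)) : P c := by
  haveI := coneIn_hasLeftCalculusOfFractions N hN
  have h1 : Q.map (𝟙 c) = Q.map (0 : c ⟶ c) := hc.eq_of_src _ _
  rw [MorphismProperty.map_eq_iff_postcomp Q (coneIn N)] at h1
  obtain ⟨Z, s, hs, hcomp⟩ := h1
  have hs0 : s = 0 := by simpa using hcomp
  rw [hs0] at hs
  obtain ⟨E, g, h, hT, hE⟩ := hs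
  have hT' := rot_of_distTriang _ hT
  have hmor : (Triangle.mk (0 : c ⟶ Z) g h).rotate.mor₃ = 0 := by
    simp [Triangle.rotate]
    exact neg_eq_zero.mpr ((shiftFunctor C (1 : ℤ)).map_zero c Z)
  obtain ⟨e, he₁, he₂⟩ := exists_iso_binaryBiproduct_of_distTriang _ hT' hmor
  have hPE : P E := hNP E hE
  have h2 : P (Z ⊞ (c⟦(1 : ℤ)⟧)) := hP.iso_closed e hPE
  have h3 : P (c⟦(1 : ℤ)⟧) := (hPs _ _ h2).2
  have h4 : P ((c⟦(1 : ℤ)⟧)⟦(-1 : ℤ)⟧) := hP.shift _ (-1) h3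
  exact hP.iso_closed ((shiftEquiv C (1 : ℤ)).unitIso.symm.app c) h4

include hN hP hPs hNP in
lemma mem_of_iso_obj {x z : C} (e : Q.obj x ≅ Q.obj z) (hz : P z) : P x := by
  haveI := coneIn_hasLeftCalculusOfFractions N hN
  obtain ⟨φ, hφ⟩ := Localization.exists_leftFraction Q (coneIn N) e.hom
  obtain ⟨E, g, h, hT, hE⟩ := φ.hs
  have hY : P φ.Y' := hP.two_of_three₁₃ _ hT hz (hNP E hE)
  have hiso : IsIso (Q.map φ.f) := by
    haveI : IsIso (Q.map φ.s) := Localization.inverts Q (coneIn N) _ φ.hs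
    rw [← MorphismProperty.LeftFraction.map_comp_map_s φ Q
      (Localization.inverts Q (coneIn N)), ← hφ]
    infer_instance
  obtain ⟨E', g', h', hT'⟩ := distinguished_cocone_triangle φ.f
  have hz3 : IsZero (Q.obj E') := by
    have hmap := Q.map_distinguished _ hT'
    exact Triangle.isZero₃_of_isIso₁ _ hmap hiso
  have hE' : P E' := mem_of_isZero_obj N hN Q P hP hPs hNP E' hz3
  exact hP.two_of_three₂₃ _ hT' hY hE'

include hN hP hPs hNP in
lemma preimage_ext₁₂ (T : Triangle D) (hT : T ∈ distTriang D)
    (h1 : ∃ c, P c ∧ Nonempty (T.obj₁ ≅ Q.obj c))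
    (h2 : ∃ c, P c ∧ Nonempty (T.obj₂ ≅ Q.obj c)) :
    ∃ c, P c ∧ Nonempty (T.obj₃ ≅ Q.obj c) := by
  haveI := coneIn_hasLeftCalculusOfFractions N hN
  obtain ⟨z₁, hz₁, ⟨e₁⟩⟩ := h1
  obtain ⟨z₂, hz₂, ⟨e₂⟩⟩ := h2
  obtain ⟨φ, hφ⟩ := Localization.exists_leftFraction Q (coneIn N)
    (e₁.inv ≫ T.mor₁ ≫ e₂.hom)
  obtain ⟨E, g, h, hTE, hE⟩ := φ.hs
  have hw : P φ.Y' := hP.two_of_three₁₃ _ hTE hz₂ (hNP E hE)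
  obtain ⟨c, g', h', hTc⟩ := distinguished_cocone_triangle φ.f
  have hc : P c := hP.two_of_three₁₂ _ hTc hz₁ hw
  haveI : IsIso (Q.map φ.s) := Localization.inverts Q (coneIn N) _ φ.hs
  have comm : e₁.hom ≫ Q.map φ.f = T.mor₁ ≫ (e₂ ≪≫ asIso (Q.map φ.s)).hom := by
    rw [← MorphismProperty.LeftFraction.map_comp_map_s φ Q
      (Localization.inverts Q (coneIn N)), ← hφ]
    simp
  obtain ⟨e', he'1, he'2⟩ := exists_iso_of_arrow_iso T
    (Q.mapTriangle.obj (Triangle.mk φ.f g' h')) hT (Q.map_distinguished _ hTc)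
    (Arrow.isoMk e₁ (e₂ ≪≫ @asIso _ _ _ _ (Q.map φ.s) this) comm)
  exact ⟨c, hc, ⟨Triangle.π₃.mapIso e'⟩⟩

include hN hP hPs hNP in
lemma preimage_isTriangulatedSub :
    IsTriangulatedSub (fun y : D => ∃ c, P c ∧ Nonempty (y ≅ Q.obj c)) := by
  have shift : ∀ (y : D) (n : ℤ),
      (∃ c, P c ∧ Nonempty (y ≅ Q.obj c)) → ∃ c, P c ∧ Nonempty (y⟦n⟧ ≅ Q.obj c) := by
    rintro y n ⟨c, hc, ⟨e⟩⟩
    exact ⟨c⟦n⟧, hP.shift c n hc,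
      ⟨(shiftFunctor D n).mapIso e ≪≫ ((Q.commShiftIso n).app c).symm⟩⟩
  have isoc : ∀ ⦃x y : D⦄, (x ≅ y) → (∃ c, P c ∧ Nonempty (x ≅ Q.obj c)) →
      ∃ c, P c ∧ Nonempty (y ≅ Q.obj c) := by
    rintro x y e ⟨c, hc, ⟨e'⟩⟩
    exact ⟨c, hc, ⟨e.symm ≪≫ e'⟩⟩
  refine ⟨isoc, ?_, shift, ?_, ?_, ?_⟩
  · intro y hy
    exact ⟨0, hP.zero 0 (isZero_zero C), ⟨hy.iso (Q.map_isZero (isZero_zero C))⟩⟩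
  · exact preimage_ext₁₂ N hN Q P hP hPs hNP
  · intro T hT h2 h3
    have h4 := preimage_ext₁₂ N hN Q P hP hPs hNP _ (rot_of_distTriang _ hT) h2 h3
    exact isoc ((shiftEquiv D (1 : ℤ)).unitIso.symm.app T.obj₁) (shift _ (-1) h4)
  · intro T hT h1 h3
    exact preimage_ext₁₂ N hN Q P hP hPs hNP _ (inv_rot_of_distTriang _ hT)
      (shift _ (-1) h3) h1

include hN in
lemma isZero_obj_of_mem {z : C} (hz : N z) : IsZero (Q.obj z) := by
  have h0 : coneIn N (0 : z ⟶ (0 : C)) :=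
    ⟨z⟦(1 : ℤ)⟧, 0, -(𝟙 z)⟦(1 : ℤ)⟧',
      rot_of_distTriang _ (contractible_distinguished z), hN.shift z 1 hz⟩
  haveI : IsIso (Q.map (0 : z ⟶ (0 : C))) := Localization.inverts Q (coneIn N) _ h0
  exact IsZero.of_iso (Q.map_isZero (isZero_zero C)) (asIso (Q.map (0 : z ⟶ (0 : C))))

end Auxiliary

/-- Let `N` and `M` be triangulated subcategories of an essentially
small triangulated category `C` and `Q : C ⥤ D` the Verdier quotient of `C` by `N`.
Then the smallest thick subcategory `N ∨_thi M` containing `N` and `M` equals the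
thick closure of the preimage `Q⁻¹(im (Q|_M))`, where `im (Q|_M)` is the smallest
triangulated subcategory of `D` containing `Q(m)` for all objects `m` of `M`. -/
theorem thick_join_eq_thickClosure_preimage_image
    {C : Type u} [Category.{v} C] [HasZeroObject C] [HasShift C ℤ] [Preadditive C]
    [∀ n : ℤ, (shiftFunctor C n).Additive] [Pretriangulated C] [IsTriangulated C]
    [HasBinaryBiproducts C] [EssentiallySmall.{w} C]
    {D : Type u₂} [Category.{v₂} D] [HasZeroObject D] [HasShift D ℤ] [Preadditive D]
    [∀ n : ℤ, (shiftFunctor D n).Additive] [Pretriangulated D] [IsTriangulated D]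
    (N M : C → Prop) (hN : IsTriangulatedSub N) (hM : IsTriangulatedSub M)
    (Q : C ⥤ D) [Q.CommShift ℤ] [Q.IsTriangulated] [Q.IsLocalization (coneIn N)] :
    ∀ x : C, thickClosure (fun z : C => N z ∨ M z) x ↔
      thickClosure
        (fun z : C =>
          triClosure (fun y : D => ∃ m : C, M m ∧ Nonempty (y ≅ Q.obj m)) (Q.obj z)) x := by
  intro x
  constructor
  · intro hx P hP hPs hgen
    refine hx P hP hPs ?_
    rintro z (hz | hz)
    · refine hgen z ?_
      intro Ptri hPtri hg
      exact hPtri.zero _ (isZero_obj_of_mem N hN Q hz)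
    · refine hgen z ?_
      intro Ptri hPtri hg
      exact hg _ ⟨z, hz, ⟨Iso.refl _⟩⟩
  · intro hx P hP hPs hgen
    have hNP : ∀ z, N z → P z := fun z hz => hgen z (Or.inl hz)
    refine hx P hP hPs ?_
    intro z hz
    obtain ⟨c, hc, ⟨e⟩⟩ := hz (fun y : D => ∃ c, P c ∧ Nonempty (y ≅ Q.obj c))
      (preimage_isTriangulatedSub N hN Q P hP hPs hNP)
      (by rintro y ⟨m, hm, ⟨e⟩⟩; exact ⟨m, hgen m (Or.inr hm), ⟨e⟩⟩)
    exact mem_of_iso_obj N hN Q P hP hPs hNP e hc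
end

section
/- Let N and M be triangulated subcategories of an essentially small triangulated category T. Then there is an equivalence of triangulated categories between the triangulated cokernel of the canonical functor N/(N ∩ M) → T/M (i.e. the Verdier quotient of T/M by the triangulated image of this functor) and the Verdier quotient T/(N ∨_thi M), where N ∨_thi M is the smallest thick subcategory of T containing both N and M. -/
open CategoryTheory CategoryTheory.Limits CategoryTheory.Pretriangulated

universe w v u v₂ u₂ v₃ u₃ v₄ u₄ v₅ u₅ v₆ u₆

section Auxiliary

open CategoryTheory.Triangulated ZeroObject

variable {C : Type u} [Category.{v} C] [HasZeroObject C] [HasShift C ℤ]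
    [Preadditive C] [∀ n : ℤ, (shiftFunctor C n).Additive] [Pretriangulated C]

/-- The `Triangulated.Subcategory` associated to an `IsTriangulatedSub` predicate. -/
def IsTriangulatedSub.sub {P : C → Prop} (hP : IsTriangulatedSub P) :
    ObjectProperty C :=
  P

instance IsTriangulatedSub.sub_isTriangulated {P : C → Prop} (hP : IsTriangulatedSub P) :
    hP.sub.IsTriangulated where
  exists_zero := ⟨0, isZero_zero C, hP.zero 0 (isZero_zero C)⟩
  isStableUnderShiftBy n := ⟨fun x hx => hP.shift x n hx⟩
  ext₂' T hT h1 h3 := ObjectProperty.le_isoClosure _ _ (hP.two_of_three₁₃ T hT h1 h3)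

lemma IsTriangulatedSub.closed {P : C → Prop} (hP : IsTriangulatedSub P) :
    hP.sub.IsClosedUnderIsomorphisms :=
  ⟨fun e h => hP.iso_closed e h⟩

lemma coneIn_eq {P : C → Prop} (hP : IsTriangulatedSub P) : coneIn P = hP.sub.trW := by
  ext X Y f
  constructor
  · rintro ⟨Z, g, h, hT, hZ⟩
    exact ⟨Z, g, h, hT, hZ⟩
  · rintro ⟨Z, g, h, hT, hZ⟩
    exact ⟨Z, g, h, hT, hZ⟩

/-- A constructor for `IsTriangulatedSub` which only requires one of the
two-out-of-three conditions. -/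
lemma isTriangulatedSub_mk {P : C → Prop}
    (iso_closed : ∀ ⦃x y : C⦄, (x ≅ y) → P x → P y)
    (zero : ∀ x : C, IsZero x → P x)
    (shift : ∀ (x : C) (n : ℤ), P x → P (x⟦n⟧))
    (h₁₂ : ∀ T ∈ distTriang C, P T.obj₁ → P T.obj₂ → P T.obj₃) :
    IsTriangulatedSub P := by
  have h₂₃ : ∀ T ∈ distTriang C, P T.obj₂ → P T.obj₃ → P T.obj₁ := by
    intro T hT h2 h3
    have h := h₁₂ _ (rot_of_distTriang T hT) h2 h3
    exact iso_closed (shiftShiftNeg T.obj₁ (1 : ℤ)) (shift _ (-1) h)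
  have h₁₃ : ∀ T ∈ distTriang C, P T.obj₁ → P T.obj₃ → P T.obj₂ := by
    intro T hT h1 h3
    exact h₁₂ _ (inv_rot_of_distTriang T hT) (shift _ (-1) h3) h1
  exact ⟨iso_closed, zero, shift, h₁₂, h₂₃, h₁₃⟩

lemma triClosure_isTriangulatedSub (S : C → Prop) :
    IsTriangulatedSub (triClosure S) where
  iso_closed _ _ e hx := fun P hP hS => hP.iso_closed e (hx P hP hS)
  zero x hx := fun P hP _ => hP.zero x hx
  shift x n hx := fun P hP hS => hP.shift x n (hx P hP hS)
  two_of_three₁₂ T hT h1 h2 := fun P hP hS =>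
    hP.two_of_three₁₂ T hT (h1 P hP hS) (h2 P hP hS)
  two_of_three₂₃ T hT h2 h3 := fun P hP hS =>
    hP.two_of_three₂₃ T hT (h2 P hP hS) (h3 P hP hS)
  two_of_three₁₃ T hT h1 h3 := fun P hP hS =>
    hP.two_of_three₁₃ T hT (h1 P hP hS) (h3 P hP hS)

lemma le_triClosure (S : C → Prop) (z : C) (hz : S z) : triClosure S z :=
  fun _ _ hS => hS z hz

section Thick

variable [HasBinaryBiproducts C]

lemma thickClosure_isTriangulatedSub (S : C → Prop) :
    IsTriangulatedSub (thickClosure S) where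
  iso_closed _ _ e hx := fun P hP hsum hS => hP.iso_closed e (hx P hP hsum hS)
  zero x hx := fun P hP _ _ => hP.zero x hx
  shift x n hx := fun P hP hsum hS => hP.shift x n (hx P hP hsum hS)
  two_of_three₁₂ T hT h1 h2 := fun P hP hsum hS =>
    hP.two_of_three₁₂ T hT (h1 P hP hsum hS) (h2 P hP hsum hS)
  two_of_three₂₃ T hT h2 h3 := fun P hP hsum hS =>
    hP.two_of_three₂₃ T hT (h2 P hP hsum hS) (h3 P hP hsum hS)
  two_of_three₁₃ T hT h1 h3 := fun P hP hsum hS =>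
    hP.two_of_three₁₃ T hT (h1 P hP hsum hS) (h3 P hP hsum hS)

lemma thickClosure_isSummandClosed (S : C → Prop) :
    IsSummandClosed (thickClosure S) := by
  intro x y h
  exact ⟨fun P hP hsum hS => (hsum x y (h P hP hsum hS)).1,
    fun P hP hsum hS => (hsum x y (h P hP hsum hS)).2⟩

lemma le_thickClosure (S : C → Prop) (z : C) (hz : S z) : thickClosure S z :=
  fun _ _ _ hS => hS z hz

end Thick

variable {D : Type u₂} [Category.{v₂} D] [Preadditive D] (L : C ⥤ D)

/-- Objects of a triangulated subcategory become zero in the localization. -/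
lemma isZero_obj_of_mem_s15 (S : ObjectProperty C) [S.IsTriangulated]
    [L.IsLocalization S.trW] [L.Additive] {x : C} (hx : S x) :
    IsZero (L.obj x) := by
  have hw : S.trW (0 : x ⟶ 0) :=
    ⟨_, _, _, rot_of_distTriang _ (contractible_distinguished x), S.le_shift 1 x hx⟩
  have := Localization.inverts L S.trW _ hw
  exact (L.map_isZero (isZero_zero C)).of_iso (asIso (L.map (0 : x ⟶ 0)))

/-- An object killed by the localization functor is, up to a shift, a direct
summand of an object of the subcategory. -/
lemma exists_biprod_of_isZero_obj [IsTriangulated C] (S : ObjectProperty C) [S.IsTriangulated]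
    [L.IsLocalization S.trW] {x : C} (hx : IsZero (L.obj x)) :
    ∃ (Z Y : C), S Z ∧ Nonempty (Z ≅ Y ⊞ x⟦(1 : ℤ)⟧) := by
  obtain ⟨Y, s, hs, fac⟩ := (MorphismProperty.map_eq_iff_postcomp L S.trW (𝟙 x) 0).1
    (hx.eq_of_src _ _)
  obtain rfl : s = 0 := by simpa using fac
  obtain ⟨Z, g, h', hT, hZ⟩ := hs
  obtain ⟨e, -⟩ := exists_iso_binaryBiproduct_of_distTriang _
    (rot_of_distTriang _ hT) (by simp; exact neg_eq_zero.2 (Functor.map_zero _ _ _))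
  exact ⟨Z, Y, hZ, ⟨e⟩⟩

end Auxiliary


/-- Let `N` and `M` be triangulated subcategories of an essentially
small triangulated category `C`. Then the triangulated cokernel of the canonical
functor `N/(N ∩ M) → C/M` (the Verdier quotient of `C/M` by the triangulated image of
this functor, i.e. by the smallest triangulated subcategory containing the objects
`Q'(n)` for `n` in `N`) is equivalent, as a triangulated category, to the Verdier
quotient `C/(N ∨_thi M)` of `C` by the smallest thick subcategory containing `N`
and `M`. -/
theorem coker_equiv_quotient_by_thick_join
    {C : Type u} [Category.{v} C] [HasZeroObject C] [HasShift C ℤ] [Preadditive C]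
    [∀ n : ℤ, (shiftFunctor C n).Additive] [Pretriangulated C] [IsTriangulated C]
    [HasBinaryBiproducts C] [EssentiallySmall.{w} C]
    (N M : C → Prop) (hN : IsTriangulatedSub N) (hM : IsTriangulatedSub M)
    -- the Verdier quotient `C/M`
    {D : Type u₂} [Category.{v₂} D] [HasZeroObject D] [HasShift D ℤ] [Preadditive D]
    [∀ n : ℤ, (shiftFunctor D n).Additive] [Pretriangulated D] [IsTriangulated D]
    (Q' : C ⥤ D) [Q'.CommShift ℤ] [Q'.IsTriangulated] [Q'.IsLocalization (coneIn M)]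
    -- the cokernel: the Verdier quotient of `C/M` by the triangulated image of
    -- `N/(N ∩ M) → C/M`
    {E : Type u₃} [Category.{v₃} E] [HasZeroObject E] [HasShift E ℤ] [Preadditive E]
    [∀ n : ℤ, (shiftFunctor E n).Additive] [Pretriangulated E] [IsTriangulated E]
    (R : D ⥤ E) [R.CommShift ℤ] [R.IsTriangulated]
    [R.IsLocalization (coneIn
      (triClosure (fun y : D => ∃ n : C, N n ∧ Nonempty (y ≅ Q'.obj n))))]
    -- the Verdier quotient `C/(N ∨_thi M)`
    {E' : Type u₄} [Category.{v₄} E'] [HasZeroObject E'] [HasShift E' ℤ] [Preadditive E']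
    [∀ n : ℤ, (shiftFunctor E' n).Additive] [Pretriangulated E'] [IsTriangulated E']
    (R' : C ⥤ E') [R'.CommShift ℤ] [R'.IsTriangulated]
    [R'.IsLocalization (coneIn (thickClosure (fun z : C => N z ∨ M z)))] :
    ∃ G : E ⥤ E', G.IsEquivalence ∧
      ∃ hc : G.CommShift ℤ, haveI := hc; G.IsTriangulated := by
  have hTC : IsTriangulatedSub (thickClosure (fun z : C => N z ∨ M z)) :=
    thickClosure_isTriangulatedSub _
  have hTCs : IsSummandClosed (thickClosure (fun z : C => N z ∨ M z)) :=
    thickClosure_isSummandClosed _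
  have hT2 : IsTriangulatedSub
      (triClosure (fun y : D => ∃ n : C, N n ∧ Nonempty (y ≅ Q'.obj n))) :=
    triClosure_isTriangulatedSub _
  haveI : hM.sub.IsClosedUnderIsomorphisms := hM.closed
  haveI : hTC.sub.IsClosedUnderIsomorphisms := hTC.closed
  haveI : hT2.sub.IsClosedUnderIsomorphisms := hT2.closed
  haveI locQ : Q'.IsLocalization hM.sub.trW := by
    rw [← coneIn_eq hM]; infer_instance
  haveI locR : R.IsLocalization hT2.sub.trW := by
    rw [← coneIn_eq hT2]; infer_instance
  haveI locR' : R'.IsLocalization hTC.sub.trW := by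
    rw [← coneIn_eq hTC]; infer_instance
  have hNTC : ∀ z : C, N z → thickClosure (fun z : C => N z ∨ M z) z :=
    fun z hz => le_thickClosure _ z (Or.inl hz)
  have hMTC : ∀ z : C, M z → thickClosure (fun z : C => N z ∨ M z) z :=
    fun z hz => le_thickClosure _ z (Or.inr hz)
  -- objects killed by `Q'` lie in the thick closure
  have hker : ∀ x : C, IsZero (Q'.obj x) → thickClosure (fun z : C => N z ∨ M z) x := by
    intro x hx
    obtain ⟨Z, Y, hZ, ⟨e⟩⟩ := exists_biprod_of_isZero_obj Q' hM.sub hx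
    have h2 := (hTCs _ _ (hTC.iso_closed e (hMTC _ hZ))).2
    exact hTC.iso_closed (shiftShiftNeg x (1 : ℤ)) (hTC.shift _ (-1) h2)
  -- every object of the triangulated closure of the image of `N` is isomorphic to the
  -- image of an object of the thick closure
  have hchar : ∀ d : D,
      triClosure (fun y : D => ∃ n : C, N n ∧ Nonempty (y ≅ Q'.obj n)) d →
      ∃ c : C, thickClosure (fun z : C => N z ∨ M z) c ∧ Nonempty (d ≅ Q'.obj c) := by
    intro d hd
    refine hd (fun d => ∃ c : C, thickClosure (fun z : C => N z ∨ M z) c ∧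
      Nonempty (d ≅ Q'.obj c)) ?_ ?_
    · apply isTriangulatedSub_mk
      · rintro x y e ⟨c, hc, ⟨e'⟩⟩
        exact ⟨c, hc, ⟨e.symm ≪≫ e'⟩⟩
      · intro x hx
        obtain ⟨z, hz⟩ := HasZeroObject.zero (C := C)
        exact ⟨z, hTC.zero z hz, ⟨hx.iso (Q'.map_isZero hz)⟩⟩
      · rintro x n ⟨c, hc, ⟨e⟩⟩
        exact ⟨c⟦n⟧, hTC.shift c n hc,
          ⟨(shiftFunctor D n).mapIso e ≪≫ ((Q'.commShiftIso n).app c).symm⟩⟩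
      · rintro T hT ⟨c₁, h₁, ⟨e₁⟩⟩ ⟨c₂, h₂, ⟨e₂⟩⟩
        obtain ⟨φ, hφ⟩ := Localization.exists_leftFraction Q' hM.sub.trW
          (e₁.inv ≫ T.mor₁ ≫ e₂.hom)
        obtain ⟨Zs, gs, hs', hTs, hZs⟩ := φ.hs
        have hY' : thickClosure (fun z : C => N z ∨ M z) φ.Y' :=
          hTC.two_of_three₁₃ _ hTs h₂ (hMTC _ hZs)
        obtain ⟨c₃, g₃, h₃, hT₃⟩ := distinguished_cocone_triangle φ.f
        have hc₃ := hTC.two_of_three₁₂ _ hT₃ h₁ hY'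
        have key : (e₁.inv ≫ T.mor₁ ≫ e₂.hom) ≫ Q'.map φ.s = Q'.map φ.f := by
          rw [hφ, MorphismProperty.LeftFraction.map_comp_map_s]
        have comm : T.mor₁ ≫ (e₂ ≪≫ Localization.isoOfHom Q' hM.sub.trW φ.s φ.hs).hom
            = e₁.hom ≫ Q'.map φ.f := by
          rw [← key]
          simp
        have E := isoTriangleOfIso₁₂ T (Q'.mapTriangle.obj (Triangle.mk φ.f g₃ h₃)) hT
          (Q'.map_distinguished _ hT₃) e₁
          (e₂ ≪≫ Localization.isoOfHom Q' hM.sub.trW φ.s φ.hs) comm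
        exact ⟨c₃, hc₃, ⟨Triangle.π₃.mapIso E⟩⟩
    · rintro z ⟨n, hn, ⟨e⟩⟩
      exact ⟨n, hNTC n hn, ⟨e⟩⟩
  -- objects of the thick closure are killed by `Q' ⋙ R`
  have hPZ : IsTriangulatedSub (fun c : C => IsZero ((Q' ⋙ R).obj c)) := by
    apply isTriangulatedSub_mk
    · intro x y e h
      exact h.of_iso ((Q' ⋙ R).mapIso e).symm
    · intro x hx
      exact (Q' ⋙ R).map_isZero hx
    · intro x n hx
      exact ((shiftFunctor E n).map_isZero hx).of_iso (((Q' ⋙ R).commShiftIso n).app x)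
    · intro T hT h1 h2
      exact Triangle.isZero₃_of_isZero₁₂ _ ((Q' ⋙ R).map_distinguished _ hT) h1 h2
  have hPZs : IsSummandClosed (fun c : C => IsZero ((Q' ⋙ R).obj c)) := by
    intro x y h
    constructor
    · refine (IsZero.iff_id_eq_zero _).2 ?_
      rw [← (Q' ⋙ R).map_id, ← biprod.inl_fst (X := x) (Y := y), Functor.map_comp,
        h.eq_of_tgt ((Q' ⋙ R).map biprod.inl) 0, zero_comp]
    · refine (IsZero.iff_id_eq_zero _).2 ?_
      rw [← (Q' ⋙ R).map_id, ← biprod.inr_snd (X := x) (Y := y), Functor.map_comp,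
        h.eq_of_tgt ((Q' ⋙ R).map biprod.inr) 0, zero_comp]
  have hmem : ∀ z : C, (N z ∨ M z) → IsZero ((Q' ⋙ R).obj z) := by
    rintro z (hz | hz)
    · exact isZero_obj_of_mem_s15 R hT2.sub (le_triClosure _ _ ⟨z, hz, ⟨Iso.refl _⟩⟩)
    · exact R.map_isZero (isZero_obj_of_mem_s15 Q' hM.sub hz)
  have hinv : hTC.sub.trW.IsInvertedBy (Q' ⋙ R) := by
    rintro X Y f ⟨Z, g, h, hT, hZ⟩
    have hz : IsZero ((Q' ⋙ R).obj Z) := hZ _ hPZ hPZs hmem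
    exact (Triangle.isZero₃_iff_isIso₁ _ ((Q' ⋙ R).map_distinguished _ hT)).1 hz
  have hb : hM.sub.trW ≤ hTC.sub.trW := by
    rintro X Y f ⟨Z, g, h, hT, hZ⟩
    exact ⟨Z, g, h, hT, hMTC _ hZ⟩
  have hc : hT2.sub.trW ≤ hTC.sub.trW.map Q' := by
    rintro X Y f ⟨Z, g, h, hT, hZ⟩
    haveI : Q'.EssSurj := Localization.essSurj Q' hM.sub.trW
    obtain ⟨a, ⟨eX⟩⟩ : ∃ a : C, Nonempty (Q'.obj a ≅ X) := ⟨_, ⟨Q'.objObjPreimageIso X⟩⟩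
    obtain ⟨b, ⟨eY⟩⟩ : ∃ b : C, Nonempty (Q'.obj b ≅ Y) := ⟨_, ⟨Q'.objObjPreimageIso Y⟩⟩
    obtain ⟨φ, hφ⟩ := Localization.exists_leftFraction Q' hM.sub.trW (eX.hom ≫ f ≫ eY.inv)
    obtain ⟨c₃, g₃, h₃, hT₃⟩ := distinguished_cocone_triangle φ.f
    have key : (eX.hom ≫ f ≫ eY.inv) ≫ Q'.map φ.s = Q'.map φ.f := by
      rw [hφ, MorphismProperty.LeftFraction.map_comp_map_s]
    have comm : Q'.map φ.f ≫
        ((Localization.isoOfHom Q' hM.sub.trW φ.s φ.hs).symm ≪≫ eY).hom = eX.hom ≫ f := by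
      rw [← key]
      simp
    have E := isoTriangleOfIso₁₂ (Q'.mapTriangle.obj (Triangle.mk φ.f g₃ h₃))
      (Triangle.mk f g h) (Q'.map_distinguished _ hT₃) hT eX
      ((Localization.isoOfHom Q' hM.sub.trW φ.s φ.hs).symm ≪≫ eY) comm
    have hZc₃ := hT2.iso_closed (Triangle.π₃.mapIso E).symm hZ
    obtain ⟨c, hcTC, ⟨eiso⟩⟩ := hchar _ hZc₃
    obtain ⟨χ, hχ⟩ := Localization.exists_leftFraction Q' hM.sub.trW eiso.hom
    have key2 : eiso.hom ≫ Q'.map χ.s = Q'.map χ.f := by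
      rw [hχ]
      exact MorphismProperty.LeftFraction.map_comp_map_s _ _ _
    have hiso : IsIso (Q'.map χ.f) := by
      rw [← key2]
      have := Localization.inverts Q' hM.sub.trW χ.s χ.hs
      exact (asIso eiso.hom ≪≫ asIso (Q'.map χ.s)).isIso_hom
    obtain ⟨z, gz, hz', hTz⟩ := distinguished_cocone_triangle χ.f
    have hzZero : IsZero (Q'.obj z) :=
      (Triangle.isZero₃_iff_isIso₁ _ (Q'.map_distinguished _ hTz)).2 hiso
    have hzTC := hker z hzZero
    obtain ⟨w, gw, hw, hTw, hwM⟩ := χ.hs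
    have htTC := hTC.two_of_three₁₃ _ hTw hcTC (hMTC _ hwM)
    have hc₃TC := hTC.two_of_three₂₃ _ hTz htTC hzTC
    exact ⟨a, φ.Y', φ.f, ⟨c₃, g₃, h₃, hT₃, hc₃TC⟩,
      ⟨Arrow.isoMk eX ((Localization.isoOfHom Q' hM.sub.trW φ.s φ.hs).symm ≪≫ eY) comm.symm⟩⟩
  haveI locQR : (Q' ⋙ R).IsLocalization hTC.sub.trW :=
    Functor.IsLocalization.comp Q' R hM.sub.trW hT2.sub.trW hTC.sub.trW hinv hb hc
  haveI := Localization.essSurj_mapArrow (Q' ⋙ R) hTC.sub.trW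
  letI hcs : (Localization.uniq (Q' ⋙ R) R' hTC.sub.trW).functor.CommShift ℤ :=
    Functor.commShiftOfLocalization (Q' ⋙ R) hTC.sub.trW ℤ R'
      (Localization.uniq (Q' ⋙ R) R' hTC.sub.trW).functor
  haveI := NatTrans.commShift_iso_hom_of_localization (Q' ⋙ R) hTC.sub.trW ℤ R'
    (Localization.uniq (Q' ⋙ R) R' hTC.sub.trW).functor
  refine ⟨(Localization.uniq (Q' ⋙ R) R' hTC.sub.trW).functor, inferInstance, hcs, ?_⟩
  exact Functor.isTriangulated_of_precomp_iso
    (Localization.Lifting.iso (Q' ⋙ R) hTC.sub.trW R'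
      (Localization.uniq (Q' ⋙ R) R' hTC.sub.trW).functor)
end

section
/- Let N and M be triangulated subcategories of an essentially small triangulated category T with N thick, and let Q : T → T/N be the Verdier quotient functor. Then the smallest triangulated subcategory N ∨ M of T containing both N and M equals the preimage Q^{-1}(im(Q|_M)), where im(Q|_M) is the smallest triangulated subcategory of T/N containing Q(m) for all objects m of M. -/
open CategoryTheory CategoryTheory.Limits CategoryTheory.Pretriangulated

universe w v u v₂ u₂ v₃ u₃ v₄ u₄ v₅ u₅ v₆ u₆

section Aux

variable {C : Type u} [Category.{v} C] [HasZeroObject C] [HasShift C ℤ]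
    [Preadditive C] [∀ n : ℤ, (shiftFunctor C n).Additive] [Pretriangulated C]

lemma triClosure_isSub (S : C → Prop) : IsTriangulatedSub (triClosure S) where
  iso_closed := fun _ _ e hx P hP hS => hP.iso_closed e (hx P hP hS)
  zero := fun x hx P hP _ => hP.zero x hx
  shift := fun x n hx P hP hS => hP.shift x n (hx P hP hS)
  two_of_three₁₂ := fun T hT h1 h2 P hP hS =>
    hP.two_of_three₁₂ T hT (h1 P hP hS) (h2 P hP hS)
  two_of_three₂₃ := fun T hT h2 h3 P hP hS =>
    hP.two_of_three₂₃ T hT (h2 P hP hS) (h3 P hP hS)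
  two_of_three₁₃ := fun T hT h1 h3 P hP hS =>
    hP.two_of_three₁₃ T hT (h1 P hP hS) (h3 P hP hS)

lemma triClosure_base (S : C → Prop) {z : C} (hz : S z) : triClosure S z :=
  fun _ _ hS => hS z hz

end Aux

open ZeroObject in
/-- Let `N` and `M` be triangulated subcategories of an essentially
small triangulated category `C` with `N` thick, and let `Q : C ⥤ D` be the Verdier
quotient of `C` by `N`. Then the smallest triangulated subcategory `N ∨ M` containing
`N` and `M` equals the preimage `Q⁻¹(im (Q|_M))`, where `im (Q|_M)` is the smallest
triangulated subcategory of `D` containing `Q(m)` for all objects `m` of `M`. -/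
theorem triangulated_join_eq_preimage_image
    {C : Type u} [Category.{v} C] [HasZeroObject C] [HasShift C ℤ] [Preadditive C]
    [∀ n : ℤ, (shiftFunctor C n).Additive] [Pretriangulated C] [IsTriangulated C]
    [HasBinaryBiproducts C] [EssentiallySmall.{w} C]
    {D : Type u₂} [Category.{v₂} D] [HasZeroObject D] [HasShift D ℤ] [Preadditive D]
    [∀ n : ℤ, (shiftFunctor D n).Additive] [Pretriangulated D] [IsTriangulated D]
    (N M : C → Prop) (hN : IsTriangulatedSub N) (hM : IsTriangulatedSub M)
    (hNthick : IsSummandClosed N)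
    (Q : C ⥤ D) [Q.CommShift ℤ] [Q.IsTriangulated] [Q.IsLocalization (coneIn N)] :
    ∀ x : C, triClosure (fun z : C => N z ∨ M z) x ↔
      triClosure (fun y : D => ∃ m : C, M m ∧ Nonempty (y ≅ Q.obj m)) (Q.obj x) := by
    -- the mathlib triangulated subcategory associated to `N`
  let S : ObjectProperty C := N
  haveI hStri : S.IsTriangulated :=
    { exists_zero := ⟨0, isZero_zero C, hN.zero 0 (isZero_zero C)⟩
      isStableUnderShiftBy := fun n => ⟨fun X hX => hN.shift X n hX⟩
      ext₂' := fun T hT h1 h3 =>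
        ObjectProperty.le_isoClosure N _ (hN.two_of_three₁₃ T hT h1 h3) }
  have hW : coneIn N = S.trW := by
    funext X Y f
    apply propext
    constructor
    · rintro ⟨Z, g, h, hd, hz⟩; exact ⟨Z, g, h, hd, hz⟩
    · rintro ⟨Z, g, h, hd, hz⟩; exact ⟨Z, g, h, hd, hz⟩
  haveI : Q.IsLocalization S.trW := by rw [← hW]; infer_instance
  -- `Q` sends objects of `N` to zero objects
  have hQzero : ∀ n : C, N n → IsZero (Q.obj n) := by
    intro n hn
    have hconeIn : coneIn N (0 : n ⟶ (0 : C)) := by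
      refine ⟨n⟦(1 : ℤ)⟧, 0, -(𝟙 n)⟦(1 : ℤ)⟧', ?_, hN.shift n 1 hn⟩
      exact rot_of_distTriang _ (contractible_distinguished n)
    have : IsIso (Q.map (0 : n ⟶ (0 : C))) :=
      Localization.inverts Q (coneIn N) _ hconeIn
    have h0 : IsZero (Q.obj (0 : C)) := by
      rw [IsZero.iff_id_eq_zero, ← Q.map_id, Limits.id_zero, Q.map_zero]
    exact h0.of_iso (asIso (Q.map (0 : n ⟶ (0 : C))))
  -- objects sent to zero by `Q` lie in `N` (uses thickness of `N`)
  have hker : ∀ z : C, IsZero (Q.obj z) → N z := by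
    intro z hz
    have heq : Q.map (𝟙 z) = Q.map (0 : z ⟶ z) := by
      rw [Q.map_id, Q.map_zero, hz.eq_of_src (𝟙 _) 0]
    rw [MorphismProperty.map_eq_iff_postcomp Q S.trW] at heq
    obtain ⟨z', s, hs, hcomp⟩ := heq
    have hs0 : s = 0 := by simpa using hcomp
    rw [hs0] at hs
    obtain ⟨c, g, h, hd, hc⟩ := hs
    have hT₂ : (binaryBiproductTriangle z' (z⟦(1 : ℤ)⟧)).invRotate ∈ distTriang C :=
      inv_rot_of_distTriang _ (binaryBiproductTriangle_distinguished z' (z⟦(1 : ℤ)⟧))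
    have comm : (Triangle.mk (0 : z ⟶ z') g h).mor₁ ≫ (Iso.refl z').hom =
        (shiftShiftNeg z (1 : ℤ)).symm.hom ≫
          (binaryBiproductTriangle z' (z⟦(1 : ℤ)⟧)).invRotate.mor₁ := by
      have h1 : (binaryBiproductTriangle z' (z⟦(1 : ℤ)⟧)).invRotate.mor₁ = 0 := by
        change -((shiftFunctor C (-1)).map (0 : (z⟦(1 : ℤ)⟧) ⟶ z'⟦(1 : ℤ)⟧)) ≫
          (shiftFunctorCompIsoId C (1 : ℤ) (-1) (by omega)).hom.app z' = 0
        simp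
      rw [h1]
      exact (zero_comp : (0 : z ⟶ z') ≫ 𝟙 z' = 0).trans comp_zero.symm
    have eT := isoTriangleOfIso₁₂ _ _ hd hT₂
      ((shiftShiftNeg z (1 : ℤ)).symm) (Iso.refl z') comm
    have hsum : N (z' ⊞ z⟦(1 : ℤ)⟧) :=
      hN.iso_closed (Triangle.π₃.mapIso eT) hc
    have hz1 : N (z⟦(1 : ℤ)⟧) := (hNthick z' (z⟦(1 : ℤ)⟧) hsum).2
    exact hN.iso_closed (shiftShiftNeg z (1 : ℤ)) (hN.shift _ (-1) hz1)
  -- saturation: morphisms inverted by `Q` have cone in `N`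
  have hsat : ∀ {x y : C} (f : x ⟶ y), IsIso (Q.map f) → coneIn N f := by
    intro x y f hf
    obtain ⟨c, g, h, hd⟩ := distinguished_cocone_triangle f
    refine ⟨c, g, h, hd, ?_⟩
    apply hker
    exact Triangle.isZero₃_of_isIso₁ _ (Q.map_distinguished _ hd) hf
  -- the join `N ∨ M`
  set J : C → Prop := triClosure (fun z : C => N z ∨ M z) with hJdef
  have hJ : IsTriangulatedSub J := triClosure_isSub _
  have hNJ : ∀ z, N z → J z := fun z hz => triClosure_base _ (Or.inl hz)
  have hMJ : ∀ z, M z → J z := fun z hz => triClosure_base _ (Or.inr hz)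
  -- the essential image of `J` in `D`
  set P' : D → Prop := fun y => ∃ c : C, J c ∧ Nonempty (y ≅ Q.obj c) with hP'def
  have hP'iso : ∀ ⦃y y' : D⦄, (y ≅ y') → P' y → P' y' := by
    rintro y y' e ⟨c, hc, ⟨e'⟩⟩
    exact ⟨c, hc, ⟨e.symm ≪≫ e'⟩⟩
  have hP'shift : ∀ (y : D) (n : ℤ), P' y → P' (y⟦n⟧) := by
    rintro y n ⟨c, hc, ⟨e⟩⟩
    exact ⟨c⟦n⟧, hJ.shift c n hc,
      ⟨(shiftFunctor D n).mapIso e ≪≫ ((Q.commShiftIso n).app c).symm⟩⟩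
  have hP'unshift : ∀ (y : D), P' (y⟦(1 : ℤ)⟧) → P' y := by
    intro y hy
    exact hP'iso (shiftShiftNeg y (1 : ℤ)) (hP'shift _ (-1) hy)
  have key : ∀ (T : Triangle D), (T ∈ distTriang D) → P' T.obj₁ → P' T.obj₂ → P' T.obj₃ := by
    rintro T hT ⟨c₁, hc₁, ⟨e₁⟩⟩ ⟨c₂, hc₂, ⟨e₂⟩⟩
    obtain ⟨φ, hφ⟩ := Localization.exists_leftFraction Q S.trW (e₁.inv ≫ T.mor₁ ≫ e₂.hom)
    obtain @⟨c', f, s, hs⟩ := φ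
    have hφ' : e₁.inv ≫ T.mor₁ ≫ e₂.hom =
        Q.map f ≫ (Localization.isoOfHom Q S.trW s hs).inv := hφ
    obtain ⟨c₃, g, h, hd⟩ := distinguished_cocone_triangle f
    have hc'J : J c' := by
      obtain ⟨n'', g2, h2, hd2, hn''⟩ := hs
      exact hJ.two_of_three₁₃ _ hd2 hc₂ (hNJ _ hn'')
    have hc₃J : J c₃ := hJ.two_of_three₁₂ _ hd hc₁ hc'J
    have hT' : Q.mapTriangle.obj (Triangle.mk f g h) ∈ distTriang D :=
      Q.map_distinguished _ hd
    have comm : T.mor₁ ≫ (e₂ ≪≫ Localization.isoOfHom Q S.trW s hs).hom =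
        e₁.hom ≫ (Q.mapTriangle.obj (Triangle.mk f g h)).mor₁ := by
      show T.mor₁ ≫ e₂.hom ≫ (Localization.isoOfHom Q S.trW s hs).hom = e₁.hom ≫ Q.map f
      refine (cancel_mono (Localization.isoOfHom Q S.trW s hs).inv).1 ?_
      simp only [Category.assoc, Iso.hom_inv_id, Category.comp_id]
      rw [← hφ']
      simp
    have eT := isoTriangleOfIso₁₂ T _ hT hT' e₁
      (e₂ ≪≫ Localization.isoOfHom Q S.trW s hs) comm
    exact ⟨c₃, hc₃J, ⟨Triangle.π₃.mapIso eT⟩⟩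
  have hP'sub : IsTriangulatedSub P' := by
    refine ⟨hP'iso, ?_, hP'shift, key, ?_, ?_⟩
    · intro y hy
      exact ⟨0, hJ.zero 0 (isZero_zero C),
        ⟨hy.iso (hQzero 0 (hN.zero 0 (isZero_zero C)))⟩⟩
    · intro T hT h2 h3
      exact hP'unshift _ (key T.rotate (rot_of_distTriang T hT) h2 h3)
    · intro T hT h1 h3
      exact key T.invRotate (inv_rot_of_distTriang T hT) (hP'shift _ (-1) h3) h1
  intro x
  constructor
  · intro hx
    refine hx (fun c : C => triClosure
        (fun y : D => ∃ m : C, M m ∧ Nonempty (y ≅ Q.obj m)) (Q.obj c)) ?_ ?_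
    · have hsub := triClosure_isSub
        (fun y : D => ∃ m : C, M m ∧ Nonempty (y ≅ Q.obj m))
      exact
        { iso_closed := fun _ _ e hx' => hsub.iso_closed (Q.mapIso e) hx'
          zero := fun c hc => hsub.zero _ (by
            rw [IsZero.iff_id_eq_zero, ← Q.map_id, hc.eq_of_src (𝟙 _) 0, Q.map_zero])
          shift := fun c n hc => hsub.iso_closed ((Q.commShiftIso n).app c).symm
            (hsub.shift _ n hc)
          two_of_three₁₂ := fun T hT h1 h2 =>
            hsub.two_of_three₁₂ _ (Q.map_distinguished T hT) h1 h2
          two_of_three₂₃ := fun T hT h2 h3 =>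
            hsub.two_of_three₂₃ _ (Q.map_distinguished T hT) h2 h3
          two_of_three₁₃ := fun T hT h1 h3 =>
            hsub.two_of_three₁₃ _ (Q.map_distinguished T hT) h1 h3 }
    · rintro z (hz | hz)
      · exact (triClosure_isSub _).zero _ (hQzero z hz)
      · exact triClosure_base _ ⟨z, hz, ⟨Iso.refl _⟩⟩
  · intro hx
    have hmem : P' (Q.obj x) := by
      refine hx P' hP'sub ?_
      rintro y ⟨m, hm, ⟨e⟩⟩
      exact ⟨m, hMJ m hm, ⟨e⟩⟩
    obtain ⟨c, hc, ⟨e⟩⟩ := hmem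
    obtain ⟨φ, hφ⟩ := Localization.exists_leftFraction Q S.trW e.hom
    obtain @⟨z, f, s, hs⟩ := φ
    have hφ' : e.hom = Q.map f ≫ (Localization.isoOfHom Q S.trW s hs).inv := hφ
    have hQf : IsIso (Q.map f) := by
      rw [show Q.map f = e.hom ≫ (Localization.isoOfHom Q S.trW s hs).hom by
        rw [hφ']; simp]
      infer_instance
    obtain ⟨n', g, h, hd, hn'⟩ := hsat f hQf
    have hzJ : J z := by
      obtain ⟨n'', g2, h2, hd2, hn''⟩ := hs
      exact hJ.two_of_three₁₃ _ hd2 hc (hNJ _ hn'')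
    exact hJ.two_of_three₂₃ _ hd hzJ (hNJ _ hn')
end

section
/- A right quasi-split exact sequence of triangulated categories T →i T' →p T'' is exact: the composite p∘i is isomorphic to the zero functor, the functor i induces an equivalence of triangulated categories between T and Ker p (the full subcategory of T' of objects y such that p(y) is isomorphic to the zero object), and the induced functor T'/Ker p → T'' on the Verdier quotient is an equivalence of triangulated categories. -/
open CategoryTheory CategoryTheory.Limits CategoryTheory.Pretriangulated

universe w v u v₂ u₂ v₃ u₃ v₄ u₄

/-- A right quasi-split exact sequence of triangulated categories
`T₁ →i T₂ →p T₃` is exact: `p ∘ i` is isomorphic to the zero functor, `i` induces an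
equivalence of `T₁` with `Ker p` (i.e. `i` is fully faithful and its essential image
is exactly the objects `y` with `p(y)` zero), and the induced functor
`T₂/Ker p → T₃` is an equivalence of (triangulated) categories, where `T₂/Ker p` is
modelled by a localization `R : T₂ ⥤ V` of `T₂` at the morphisms whose cone lies in
`Ker p`, and the induced functor by any `H : V ⥤ T₃` with `R ⋙ H ≅ p`. -/
theorem right_quasi_split_is_exact
    {T₁ : Type u} [Category.{v} T₁] [HasZeroObject T₁] [HasShift T₁ ℤ] [Preadditive T₁]
    [∀ n : ℤ, (shiftFunctor T₁ n).Additive] [Pretriangulated T₁] [IsTriangulated T₁]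
    {T₂ : Type u₂} [Category.{v₂} T₂] [HasZeroObject T₂] [HasShift T₂ ℤ] [Preadditive T₂]
    [∀ n : ℤ, (shiftFunctor T₂ n).Additive] [Pretriangulated T₂] [IsTriangulated T₂]
    {T₃ : Type u₃} [Category.{v₃} T₃] [HasZeroObject T₃] [HasShift T₃ ℤ] [Preadditive T₃]
    [∀ n : ℤ, (shiftFunctor T₃ n).Additive] [Pretriangulated T₃] [IsTriangulated T₃]
    (i : T₁ ⥤ T₂) [i.CommShift ℤ] [i.IsTriangulated]
    (p : T₂ ⥤ T₃) [p.CommShift ℤ] [p.IsTriangulated]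
    (q : T₂ ⥤ T₁) [q.CommShift ℤ] [q.IsTriangulated]
    (j : T₃ ⥤ T₂) [j.CommShift ℤ] [j.IsTriangulated]
    (A : q ⋙ i ⟶ 𝟭 T₂) (B : 𝟭 T₁ ⟶ i ⋙ q)
    (Cc : 𝟭 T₂ ⟶ p ⋙ j) (Dd : j ⋙ p ⟶ 𝟭 T₃)
    (E : p ⋙ j ⟶ (q ⋙ i) ⋙ shiftFunctor T₂ (1 : ℤ))
    -- triangle identities for the adjunction `i ⊣ q`
    (hiq₁ : ∀ x : T₁, i.map (B.app x) ≫ A.app (i.obj x) = 𝟙 (i.obj x))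
    (hiq₂ : ∀ y : T₂, B.app (q.obj y) ≫ q.map (A.app y) = 𝟙 (q.obj y))
    -- triangle identities for the adjunction `p ⊣ j`
    (hpj₁ : ∀ y : T₂, p.map (Cc.app y) ≫ Dd.app (p.obj y) = 𝟙 (p.obj y))
    (hpj₂ : ∀ z : T₃, Cc.app (j.obj z) ≫ j.map (Dd.app z) = 𝟙 (j.obj z))
    -- `B` and `Dd` are natural isomorphisms
    (hB : ∀ x : T₁, IsIso (B.app x)) (hDd : ∀ z : T₃, IsIso (Dd.app z))
    -- the triangles `(A_y, Cc_y, E_y)` are distinguished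
    (hE : ∀ y : T₂, Triangle.mk (A.app y) (Cc.app y) (E.app y) ∈ distTriang T₂)
    -- the Verdier quotient `T₂ / Ker p`
    {V : Type u₄} [Category.{v₄} V] (R : T₂ ⥤ V)
    [R.IsLocalization (coneIn (fun y : T₂ => IsZero (p.obj y)))] :
    -- `p ∘ i` is trivial
    (∀ x : T₁, IsZero (p.obj (i.obj x))) ∧
    -- `i` induces an equivalence of `T₁` with `Ker p`
    (i.Full ∧ i.Faithful ∧
      ∀ y : T₂, (IsZero (p.obj y) ↔ ∃ x : T₁, Nonempty (y ≅ i.obj x))) ∧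
    -- the induced functor `T₂/Ker p → T₃` exists and is an equivalence
    ((∃ H : V ⥤ T₃, Nonempty (R ⋙ H ≅ p)) ∧
      (∀ H : V ⥤ T₃, Nonempty (R ⋙ H ≅ p) → H.IsEquivalence)) := by
  classical
  -- the morphism property we localize at
  set W := coneIn (fun y : T₂ => IsZero (p.obj y)) with hWdef
  -- `A` is an isomorphism on objects of the form `i.obj x`
  have hA : ∀ x : T₁, IsIso (A.app (i.obj x)) := by
    intro x
    haveI := hB x
    haveI : IsIso (𝟙 (i.obj x)) := IsIso.id _
    exact IsIso.of_isIso_fac_left (hiq₁ x)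
  have hjpi : ∀ x : T₁, IsZero (j.obj (p.obj (i.obj x))) := fun x =>
    Triangle.isZero₃_of_isIso₁ _ (hE (i.obj x)) (hA x)
  -- part 1 : `p ∘ i` is trivial
  have part1 : ∀ x : T₁, IsZero (p.obj (i.obj x)) := by
    intro x
    haveI := hDd (p.obj (i.obj x))
    exact (p.map_isZero (hjpi x)).of_iso (asIso (Dd.app (p.obj (i.obj x)))).symm
  -- the adjunction `i ⊣ q`
  let adj : i ⊣ q :=
    { unit := B, counit := A,
      left_triangle_components := hiq₁,
      right_triangle_components := hiq₂ }
  haveI : ∀ x, IsIso (B.app x) := hB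
  haveI : IsIso adj.unit := NatIso.isIso_of_isIso_app B
  let ff : i.FullyFaithful := adj.fullyFaithfulLOfIsIsoUnit
  have ifull : i.Full := ff.full
  have ifaith : i.Faithful := ff.faithful
  -- the kernel of `p` is the essential image of `i`
  have ker : ∀ y : T₂, IsZero (p.obj y) ↔ ∃ x : T₁, Nonempty (y ≅ i.obj x) := by
    intro y
    constructor
    · intro hy
      have hz : IsZero (j.obj (p.obj y)) := j.map_isZero hy
      have : IsIso (A.app y) := (Triangle.isZero₃_iff_isIso₁ _ (hE y)).1 hz
      exact ⟨q.obj y, ⟨(asIso (A.app y)).symm⟩⟩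
    · rintro ⟨x, ⟨e⟩⟩
      exact (part1 x).of_iso (p.mapIso e)
  -- `p` inverts `W`
  have hinv : W.IsInvertedBy p := by
    rintro X Y f ⟨Z, g, h, hdist, hZ⟩
    have hd := p.map_distinguished _ hdist
    have : IsIso (p.mapTriangle.obj (Triangle.mk f g h)).mor₁ :=
      (Triangle.isZero₃_iff_isIso₁ _ hd).1 hZ
    exact this
  refine ⟨part1, ⟨ifull, ifaith, ker⟩,
    ⟨⟨Localization.lift p hinv R, ⟨Localization.fac p hinv R⟩⟩, ?_⟩⟩
  rintro H ⟨e⟩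
  -- counit : `(j ⋙ R) ⋙ H ≅ 𝟭 T₃`
  haveI : ∀ z, IsIso (Dd.app z) := hDd
  haveI : IsIso Dd := NatIso.isIso_of_isIso_app Dd
  let ε : (j ⋙ R) ⋙ H ≅ 𝟭 T₃ :=
    Functor.associator j R H ≪≫ Functor.isoWhiskerLeft j e ≪≫ asIso Dd
  -- each `Cc.app y` lies in `W`
  have hCc : ∀ y : T₂, W (Cc.app y) := by
    intro y
    refine ⟨(i.obj (q.obj y))⟦(1 : ℤ)⟧, E.app y, -((A.app y)⟦(1 : ℤ)⟧'),
      rot_of_distTriang _ (hE y), ?_⟩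
    exact ((shiftFunctor T₃ (1 : ℤ)).map_isZero (part1 (q.obj y))).of_iso
      ((p.commShiftIso (1 : ℤ)).app (i.obj (q.obj y)))
  have hRCc : ∀ y, IsIso (R.map (Cc.app y)) := fun y =>
    Localization.inverts R W _ (hCc y)
  haveI : ∀ y, IsIso ((Functor.whiskerRight Cc R).app y) := fun y => hRCc y
  haveI : IsIso (Functor.whiskerRight Cc R) := NatIso.isIso_of_isIso_app _
  let θ : 𝟭 T₂ ⋙ R ≅ (p ⋙ j) ⋙ R := asIso (Functor.whiskerRight Cc R)
  let τ : R ⋙ (H ⋙ (j ⋙ R)) ≅ R :=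
    (Functor.associator R H (j ⋙ R)).symm ≪≫ Functor.isoWhiskerRight e (j ⋙ R) ≪≫
      (Functor.associator p j R).symm ≪≫ θ.symm ≪≫ R.leftUnitor
  letI : Localization.Lifting R W R (𝟭 V) := ⟨R.rightUnitor⟩
  letI : Localization.Lifting R W R (H ⋙ (j ⋙ R)) := ⟨τ⟩
  let η : 𝟭 V ≅ H ⋙ (j ⋙ R) :=
    Localization.liftNatIso R W R R (𝟭 V) (H ⋙ (j ⋙ R)) (Iso.refl R)
  exact (CategoryTheory.Equivalence.mk H (j ⋙ R) η ε).isEquivalence_functor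
end
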